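/- arXiv:math/0209096 — 5 statements merged into one kernel-verified Lean document; each statement's English description precedes it below -/
import Mathlib

section
/- Let f : ℝⁿ → ℝⁿ be analytic, x, y ∈ ℝⁿ with Df(x) invertible, γ = sup_{k≥2} ‖Df(x)⁻¹ D^k f(x)/k!‖^{1/(k-1)} finite, and ν = ‖x - y‖·γ < 1 - √2/2. Then Df(y) is invertible and ‖Df(y)⁻¹ Df(x)‖ ≤ (1-ν)²/ψ(ν), where ψ(ν) = 1 - 4ν + 2ν². -/
noncomputable section

open Metric Filter
open scoped NNReal ENNReal

/-- The inverse of the derivative of `f` at `x` (zero if not invertible). -/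
def dfInv {n : ℕ} (f : EuclideanSpace ℝ (Fin n) → EuclideanSpace ℝ (Fin n))
    (x : EuclideanSpace ℝ (Fin n)) :
    EuclideanSpace ℝ (Fin n) →L[ℝ] EuclideanSpace ℝ (Fin n) :=
  Ring.inverse (fderiv ℝ f x)

/-- The term `‖Df(x)⁻¹ D^k f(x) / k!‖^(1/(k-1))` of Smale's gamma invariant. -/
def smaleTerm {n : ℕ} (f : EuclideanSpace ℝ (Fin n) → EuclideanSpace ℝ (Fin n))
    (x : EuclideanSpace ℝ (Fin n)) (k : ℕ) : ℝ :=
  (‖(dfInv f x).compContinuousMultilinearMap (iteratedFDeriv ℝ k f x)‖ /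
      (Nat.factorial k : ℝ)) ^ ((1 : ℝ) / ((k : ℝ) - 1))

/-- Smale's gamma invariant `γ(f,x) = sup_{k ≥ 2} ‖Df(x)⁻¹ D^k f(x)/k!‖^(1/(k-1))`. -/
def smaleGamma {n : ℕ} (f : EuclideanSpace ℝ (Fin n) → EuclideanSpace ℝ (Fin n))
    (x : EuclideanSpace ℝ (Fin n)) : ℝ :=
  ⨆ k : ℕ, smaleTerm f x (k + 2)

/-- Smale's beta invariant `β(f,x) = ‖Df(x)⁻¹ f(x)‖`, the Newton step length. -/
def smaleBeta {n : ℕ} (f : EuclideanSpace ℝ (Fin n) → EuclideanSpace ℝ (Fin n))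
    (x : EuclideanSpace ℝ (Fin n)) : ℝ :=
  ‖dfInv f x (f x)‖

/-- The Newton operator `N_f(x) = x - Df(x)⁻¹ f(x)`. -/
def newton {n : ℕ} (f : EuclideanSpace ℝ (Fin n) → EuclideanSpace ℝ (Fin n))
    (x : EuclideanSpace ℝ (Fin n)) : EuclideanSpace ℝ (Fin n) :=
  x - dfInv f x (f x)

/-- `ψ(u) = 1 - 4u + 2u²`. -/
def psi (u : ℝ) : ℝ := 1 - 4 * u + 2 * u ^ 2

section auxx

lemma smale_hasSum_aux {ν : ℝ} (h0 : 0 ≤ ν) (h1 : ν < 1) :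
    HasSum (fun k : ℕ => ((k : ℝ) + 2) * ν ^ (k + 1))
      ((2 * ν - ν ^ 2) / (1 - ν) ^ 2) := by
  have hν : ‖ν‖ < 1 := by rw [Real.norm_eq_abs, abs_of_nonneg h0]; exact h1
  have hS : HasSum (fun n : ℕ => ((n : ℝ) + 1) * ν ^ n)
      (ν / (1 - ν) ^ 2 + (1 - ν)⁻¹) := by
    have h2 := (hasSum_coe_mul_geometric_of_norm_lt_one hν).add
      (hasSum_geometric_of_lt_one h0 h1)
    convert h2 using 2 with n
    · rfl
    · ring
  have h3 := (hasSum_nat_add_iff' 1).2 hS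
  have hne : (1 : ℝ) - ν ≠ 0 := by nlinarith
  have hval : ν / (1 - ν) ^ 2 + (1 - ν)⁻¹ - ∑ i ∈ Finset.range 1, ((i : ℝ) + 1) * ν ^ i
      = (2 * ν - ν ^ 2) / (1 - ν) ^ 2 := by
    rw [Finset.sum_range_one]
    field_simp
    ring
  rw [hval] at h3
  convert h3 using 2 with k
  · rfl
  · push_cast; ring

lemma norm_ringInverse_one_sub {𝔼 : Type*} [NormedAddCommGroup 𝔼] [NormedSpace ℝ 𝔼]
    [CompleteSpace 𝔼] (t : 𝔼 →L[ℝ] 𝔼) (h : ‖t‖ < 1) :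
    ‖Ring.inverse (1 - t)‖ ≤ (1 - ‖t‖)⁻¹ := by
  have hpow : ∀ i : ℕ, ‖t ^ i‖ ≤ ‖t‖ ^ i := by
    intro i
    induction i with
    | zero => simpa [ContinuousLinearMap.one_def] using ContinuousLinearMap.norm_id_le
    | succ i ih =>
        rw [pow_succ, pow_succ]
        exact (norm_mul_le _ _).trans (mul_le_mul_of_nonneg_right ih (norm_nonneg t))
  have hgeom : Summable fun i : ℕ => ‖t‖ ^ i :=
    summable_geometric_of_lt_one (norm_nonneg t) h
  have hs : Summable fun i : ℕ => ‖t ^ i‖ :=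
    Summable.of_nonneg_of_le (fun _ => norm_nonneg _) hpow hgeom
  calc ‖Ring.inverse (1 - t)‖ = ‖∑' i : ℕ, t ^ i‖ := by
        rw [geom_series_eq_inverse t h]
    _ ≤ ∑' i : ℕ, ‖t ^ i‖ := norm_tsum_le_tsum_norm hs
    _ ≤ ∑' i : ℕ, ‖t‖ ^ i := Summable.tsum_le_tsum hpow hs hgeom
    _ = (1 - ‖t‖)⁻¹ := tsum_geometric_of_lt_one (norm_nonneg t) h

lemma rpow_coeff_bound {a γ : ℝ} (ha : 0 ≤ a) (k : ℕ)
    (h : a ^ ((1 : ℝ) / (((k : ℝ) + 2) - 1)) ≤ γ) : a ≤ γ ^ (k + 1) := by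
  set e : ℝ := (k : ℝ) + 1 with he
  have hee : ((k : ℝ) + 2) - 1 = e := by rw [he]; ring
  rw [hee] at h
  have hepos : (0 : ℝ) < e := by positivity
  have h2 : (a ^ ((1 : ℝ) / e)) ^ e ≤ γ ^ e :=
    Real.rpow_le_rpow (Real.rpow_nonneg ha _) h hepos.le
  have h3 : (a ^ ((1 : ℝ) / e)) ^ e = a := by
    rw [← Real.rpow_mul ha, one_div, inv_mul_cancel₀ hepos.ne', Real.rpow_one]
  have h4 : γ ^ e = γ ^ (k + 1) := by
    rw [he, show (k : ℝ) + 1 = ((k + 1 : ℕ) : ℝ) by push_cast; ring, Real.rpow_natCast]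
  rw [h3, h4] at h2
  exact h2

end auxx

set_option maxHeartbeats 2000000 in
/-- If `Df(x)` is invertible, `γ(f,x)` is finite, and `ν = ‖x-y‖γ(f,x) < 1-√2/2`,
then `Df(y)` is invertible and `‖Df(y)⁻¹ Df(x)‖ ≤ (1-ν)²/ψ(ν)`. -/
theorem dfInv_comp_df_bound {n : ℕ}
    (f : EuclideanSpace ℝ (Fin n) → EuclideanSpace ℝ (Fin n))
    (hf : ∀ z, AnalyticAt ℝ f z)
    (x y : EuclideanSpace ℝ (Fin n))
    (hx : IsUnit (fderiv ℝ f x))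
    (hfin : BddAbove (Set.range fun k : ℕ => smaleTerm f x (k + 2)))
    (hν : ‖x - y‖ * smaleGamma f x < 1 - Real.sqrt 2 / 2) :
    IsUnit (fderiv ℝ f y) ∧
      ‖(dfInv f y).comp (fderiv ℝ f x)‖ ≤
        (1 - ‖x - y‖ * smaleGamma f x) ^ 2 / psi (‖x - y‖ * smaleGamma f x) := by
  set A := fderiv ℝ f x with hA
  set B := dfInv f x with hB
  set γ : ℝ := smaleGamma f x with hγdef
  set u : ℝ := ‖x - y‖ with hu
  set ν : ℝ := u * γ with hνdef
  -- basic positivity facts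
  have hterm_le : ∀ k : ℕ, smaleTerm f x (k + 2) ≤ γ := fun k => by
    rw [hγdef, smaleGamma]; exact le_ciSup hfin k
  have hγ0 : 0 ≤ γ := le_trans (Real.rpow_nonneg
    (div_nonneg (norm_nonneg _) (Nat.cast_nonneg _)) _) (hterm_le 0)
  have hu0 : 0 ≤ u := norm_nonneg _
  have hν0 : 0 ≤ ν := mul_nonneg hu0 hγ0
  have hsqrt2 : Real.sqrt 2 ^ 2 = 2 := Real.sq_sqrt (by norm_num)
  have hsqrt2' : 1 ≤ Real.sqrt 2 := by nlinarith [Real.sqrt_nonneg 2]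
  have hν1 : ν < 1 := lt_of_lt_of_le hν (by nlinarith)
  have hψ : 0 < psi ν := by
    rw [psi]
    nlinarith [hν]
  -- coefficient bound
  have key : ∀ k : ℕ,
      ‖B.compContinuousMultilinearMap (iteratedFDeriv ℝ (k + 2) f x)‖ ≤
        ((k + 2).factorial : ℝ) * γ ^ (k + 1) := by
    intro k
    have hterm := hterm_le k
    rw [smaleTerm] at hterm
    have hcast : ((k + 2 : ℕ) : ℝ) = (k : ℝ) + 2 := by push_cast; ring
    rw [hcast] at hterm
    have ha0 : 0 ≤ ‖B.compContinuousMultilinearMap (iteratedFDeriv ℝ (k + 2) f x)‖ /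
        ((k + 2).factorial : ℝ) := div_nonneg (norm_nonneg _) (Nat.cast_nonneg _)
    have := rpow_coeff_bound ha0 k hterm
    have hfac : (0 : ℝ) < ((k + 2).factorial : ℝ) := by
      exact_mod_cast Nat.factorial_pos (k + 2)
    rw [div_le_iff₀ hfac] at this
    linarith [this]
  -- the normalized map g and its derivative h₁
  set g : EuclideanSpace ℝ (Fin n) → EuclideanSpace ℝ (Fin n) := fun z => B (f z) with hgdef
  have hganal : ∀ z, AnalyticAt ℝ g z := fun z => (B.analyticAt (f z)).comp (hf z)
  have hfdiff : ContDiff ℝ ⊤ f := contDiff_iff_contDiffAt.2 fun z => (hf z).contDiffAt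
  set h₁ := fderiv ℝ g with hh₁def
  have hh₁anal : ∀ z, AnalyticAt ℝ h₁ z := fun z =>
    (AnalyticOnNhd.fderiv (s := Set.univ) (fun w _ => hganal w)) z (Set.mem_univ z)
  have hcomp : ∀ z, h₁ z = B.comp (fderiv ℝ f z) := by
    intro z
    have h1 : h₁ z = fderiv ℝ (⇑B ∘ f) z := rfl
    rw [h1, fderiv_comp z B.differentiableAt (hf z).differentiableAt, B.fderiv]
  -- derivative norms of h₁ at x
  have hq : ∀ k : ℕ, ‖iteratedFDeriv ℝ (k + 1) h₁ x‖ ≤ ((k + 2).factorial : ℝ) * γ ^ (k + 1) := by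
    intro k
    rw [hh₁def, norm_iteratedFDeriv_fderiv]
    have hco : iteratedFDeriv ℝ (k + 1 + 1) g x =
        B.compContinuousMultilinearMap (iteratedFDeriv ℝ (k + 1 + 1) f x) :=
      B.iteratedFDeriv_comp_left hfdiff.contDiffAt le_top
    rw [show k + 1 + 1 = k + 2 from rfl] at hco
    rw [hco]
    exact key k
  -- Taylor series of h₁ at x
  set q : FormalMultilinearSeries ℝ (EuclideanSpace ℝ (Fin n))
      (EuclideanSpace ℝ (Fin n) →L[ℝ] EuclideanSpace ℝ (Fin n)) :=
    fun k => ((k.factorial : ℝ)⁻¹) • iteratedFDeriv ℝ k h₁ x with hqdef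
  have hqnorm : ∀ k : ℕ, ‖q (k + 1)‖ ≤ ((k : ℝ) + 2) * γ ^ (k + 1) := by
    intro k
    rw [hqdef]
    have h1 : ‖((k + 1).factorial : ℝ)⁻¹ • iteratedFDeriv ℝ (k + 1) h₁ x‖ =
        (((k + 1).factorial : ℝ))⁻¹ * ‖iteratedFDeriv ℝ (k + 1) h₁ x‖ := by
      rw [norm_smul, Real.norm_eq_abs, abs_of_nonneg (by positivity)]
    rw [h1]
    have hfac : (0 : ℝ) < ((k + 1).factorial : ℝ) := by exact_mod_cast Nat.factorial_pos _
    rw [inv_mul_le_iff₀ hfac]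
    calc ‖iteratedFDeriv ℝ (k + 1) h₁ x‖ ≤ ((k + 2).factorial : ℝ) * γ ^ (k + 1) := hq k
      _ = ((k + 1).factorial : ℝ) * (((k : ℝ) + 2) * γ ^ (k + 1)) := by
          rw [show k + 2 = (k + 1) + 1 from rfl, Nat.factorial_succ (k + 1)]
          push_cast
          ring
  -- local power series representation of h₁
  obtain ⟨p, r0, hp⟩ := hganal x
  have hlocal : ∀ w ∈ EMetric.ball (0 : EuclideanSpace ℝ (Fin n)) r0,
      HasSum (fun k => q k fun _ => w) (h₁ (x + w)) := by
    intro w hw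
    have := (hp.fderiv).hasSum_iteratedFDeriv hw
    convert this using 2 with k <;> rfl
  -- choose a radius t with u < t and γ * t < 1
  obtain ⟨t, hut, hγt, ht0⟩ : ∃ t : ℝ, u < t ∧ γ * t < 1 ∧ 0 < t := by
    rcases eq_or_lt_of_le hγ0 with hγ | hγ
    · exact ⟨u + 1, by linarith, by rw [← hγ]; norm_num, by linarith⟩
    · refine ⟨(u + γ⁻¹) / 2, ?_, ?_, by positivity⟩
      · have h3 : u < 1 / γ := (lt_div_iff₀ hγ).2 (by rw [← hνdef] at *; linarith)
        rw [one_div] at h3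
        linarith
      · have h2 : γ * ((u + γ⁻¹) / 2) = (ν + 1) / 2 := by
          field_simp [hγ.ne']
          ring
        rw [h2]
        linarith
  have hc1 : γ * t < 1 := hγt
  have hc0 : 0 ≤ γ * t := mul_nonneg hγ0 ht0.le
  -- radius of q is at least t
  have hrad : ENNReal.ofReal t ≤ q.radius := by
    have heq : ENNReal.ofReal t = (t.toNNReal : ℝ≥0∞) := rfl
    rw [heq]
    apply FormalMultilinearSeries.le_radius_of_summable
    have hcoe : ((t.toNNReal : ℝ≥0) : ℝ) = t := Real.coe_toNNReal t ht0.le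
    rw [show (fun k : ℕ => ‖q k‖ * ((t.toNNReal : ℝ≥0) : ℝ) ^ k) =
        (fun k : ℕ => ‖q k‖ * t ^ k) by funext k; rw [hcoe]]
    rw [← summable_nat_add_iff 1]
    have hmaj : HasSum (fun k : ℕ => ((k : ℝ) + 2) * (γ * t) ^ (k + 1))
        ((2 * (γ * t) - (γ * t) ^ 2) / (1 - γ * t) ^ 2) := smale_hasSum_aux hc0 hc1
    apply Summable.of_nonneg_of_le (fun k => by positivity) _ hmaj.summable
    intro k
    calc ‖q (k + 1)‖ * t ^ (k + 1) ≤ (((k : ℝ) + 2) * γ ^ (k + 1)) * t ^ (k + 1) := by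
          apply mul_le_mul_of_nonneg_right (hqnorm k) (by positivity)
      _ = ((k : ℝ) + 2) * (γ * t) ^ (k + 1) := by rw [mul_pow]; ring
  have hradpos : (0 : ℝ≥0∞) < q.radius :=
    lt_of_lt_of_le (by simp [ENNReal.ofReal_pos, ht0]) hrad
  -- identity theorem : q.sum agrees with h₁ ∘ (x + ·) on ball 0 t
  have hsub : Metric.ball (0 : EuclideanSpace ℝ (Fin n)) t ⊆
      EMetric.ball (0 : EuclideanSpace ℝ (Fin n)) q.radius := by
    rw [← Metric.emetric_ball]
    exact EMetric.ball_subset_ball hrad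
  have hanal1 : AnalyticOnNhd ℝ q.sum (Metric.ball (0 : EuclideanSpace ℝ (Fin n)) t) :=
    fun w hw => (q.hasFPowerSeriesOnBall hradpos).analyticOnNhd w (by
      exact hsub hw)
  have hanal2 : AnalyticOnNhd ℝ (fun w => h₁ (x + w))
      (Metric.ball (0 : EuclideanSpace ℝ (Fin n)) t) := fun w _ =>
    (hh₁anal (x + w)).comp (analyticAt_const.add analyticAt_id)
  have hev : q.sum =ᶠ[nhds (0 : EuclideanSpace ℝ (Fin n))] fun w => h₁ (x + w) := by
    filter_upwards [EMetric.ball_mem_nhds (0 : EuclideanSpace ℝ (Fin n)) hp.r_pos] with w hw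
    exact ((hlocal w hw).tsum_eq)
  have heqon : Set.EqOn q.sum (fun w => h₁ (x + w))
      (Metric.ball (0 : EuclideanSpace ℝ (Fin n)) t) :=
    AnalyticOnNhd.eqOn_of_preconnected_of_eventuallyEq hanal1 hanal2
      (convex_ball (0 : EuclideanSpace ℝ (Fin n)) t).isPreconnected
      (Metric.mem_ball_self ht0) hev
  -- the series at w0 = y - x
  set w0 : EuclideanSpace ℝ (Fin n) := y - x with hw0def
  have hw0mem : w0 ∈ Metric.ball (0 : EuclideanSpace ℝ (Fin n)) t := by
    rw [Metric.mem_ball, dist_zero_right, hw0def, norm_sub_rev]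
    exact hut
  have hs0 : HasSum (fun k => q k fun _ => w0) (h₁ y) := by
    have h5 := q.hasSum (hsub hw0mem)
    have h6 : q.sum w0 = h₁ y := by
      rw [heqon hw0mem]
      simp [hw0def]
    rwa [h6] at h5
  -- h₁ x = 1
  have hx1 : h₁ x = 1 := by
    rw [hcomp x, ← hA, ← ContinuousLinearMap.mul_def]
    exact Ring.inverse_mul_cancel A hx
  -- shift off the constant term
  have hq0 : (q 0 fun _ => w0) = 1 := by
    rw [hqdef]
    simp only [ContinuousMultilinearMap.smul_apply, iteratedFDeriv_zero_apply,
      Nat.factorial_zero, Nat.cast_one, inv_one, one_smul]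
    exact hx1
  have hs1 : HasSum (fun k => q (k + 1) fun _ => w0) (h₁ y - 1) := by
    have h7 := (hasSum_nat_add_iff' 1).2 hs0
    rw [Finset.sum_range_one, hq0] at h7
    exact h7
  -- termwise bound
  have hterm2 : ∀ k : ℕ, ‖q (k + 1) fun _ => w0‖ ≤ ((k : ℝ) + 2) * ν ^ (k + 1) := by
    intro k
    have h8 := (q (k + 1)).le_opNorm (fun _ => w0)
    have h9 : ∏ _i : Fin (k + 1), ‖w0‖ = u ^ (k + 1) := by
      rw [Finset.prod_const]
      simp [hw0def, norm_sub_rev, ← hu]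
    rw [h9] at h8
    calc ‖q (k + 1) fun _ => w0‖ ≤ ‖q (k + 1)‖ * u ^ (k + 1) := h8
      _ ≤ (((k : ℝ) + 2) * γ ^ (k + 1)) * u ^ (k + 1) :=
          mul_le_mul_of_nonneg_right (hqnorm k) (by positivity)
      _ = ((k : ℝ) + 2) * ν ^ (k + 1) := by rw [hνdef, mul_pow]; ring
  set M : ℝ := (2 * ν - ν ^ 2) / (1 - ν) ^ 2 with hMdef
  have hMsum : HasSum (fun k : ℕ => ((k : ℝ) + 2) * ν ^ (k + 1)) M := smale_hasSum_aux hν0 hν1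
  have hsumnorm : Summable fun k : ℕ => ‖q (k + 1) fun _ => w0‖ :=
    Summable.of_nonneg_of_le (fun _ => norm_nonneg _) hterm2 hMsum.summable
  have hEbound : ‖h₁ y - 1‖ ≤ M := by
    calc ‖h₁ y - 1‖ = ‖∑' k : ℕ, q (k + 1) fun _ => w0‖ := by rw [hs1.tsum_eq]
      _ ≤ ∑' k : ℕ, ‖q (k + 1) fun _ => w0‖ := norm_tsum_le_tsum_norm hsumnorm
      _ ≤ ∑' k : ℕ, ((k : ℝ) + 2) * ν ^ (k + 1) := Summable.tsum_le_tsum hterm2 hsumnorm hMsum.summable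
      _ = M := hMsum.tsum_eq
  have hone : (0 : ℝ) < (1 - ν) ^ 2 := by nlinarith
  have hM1 : M < 1 := by
    rw [hMdef, div_lt_one hone]
    rw [psi] at hψ
    nlinarith
  -- invertibility
  set t0 := 1 - h₁ y with ht0def
  have ht0norm : ‖t0‖ < 1 := by
    rw [ht0def, norm_sub_rev]
    exact lt_of_le_of_lt hEbound hM1
  have hu1 : IsUnit (h₁ y) := by
    have h10 := isUnit_one_sub_of_norm_lt_one (x := t0) ht0norm
    rwa [ht0def, sub_sub_cancel] at h10
  have hDfy : fderiv ℝ f y = A * h₁ y := by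
    have h11 : h₁ y = B * fderiv ℝ f y := by rw [hcomp y, ContinuousLinearMap.mul_def]
    have h11b : A * B = 1 := by
      rw [hB, dfInv, ← hA]
      exact Ring.mul_inverse_cancel A hx
    rw [h11, ← mul_assoc, h11b, one_mul]
  have hUnit : IsUnit (fderiv ℝ f y) := by
    rw [hDfy]
    exact hx.mul hu1
  refine ⟨hUnit, ?_⟩
  -- express the composition as the ring inverse of h₁ y
  obtain ⟨uA, huA⟩ := hx
  obtain ⟨u1, hu1'⟩ := hu1
  have hinve : (dfInv f y).comp A = Ring.inverse (h₁ y) := by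
    rw [← ContinuousLinearMap.mul_def, dfInv, hDfy, ← hu1', ← huA, ← Units.val_mul,
      Ring.inverse_unit, Ring.inverse_unit, mul_inv_rev, Units.val_mul, mul_assoc]
    simp
  rw [hinve]
  have hfinal : ‖Ring.inverse (h₁ y)‖ ≤ (1 - ‖t0‖)⁻¹ := by
    have h12 : h₁ y = 1 - t0 := by rw [ht0def, sub_sub_cancel]
    rw [h12]
    exact norm_ringInverse_one_sub t0 ht0norm
  have hfinal2 : (1 - ‖t0‖)⁻¹ ≤ (1 - M)⁻¹ := by
    have hM0 : ‖t0‖ ≤ M := by rw [ht0def, norm_sub_rev]; exact hEbound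
    have h13 : 0 < 1 - M := by linarith
    exact inv_anti₀ h13 (by linarith)
  have hfinal3 : (1 - M)⁻¹ = (1 - ν) ^ 2 / psi ν := by
    have h14 : 1 - M = psi ν / (1 - ν) ^ 2 := by
      have hne1 : (1:ℝ) - ν ≠ 0 := by linarith
      rw [hMdef, psi]
      field_simp
      ring
    rw [h14, inv_div]
  calc ‖Ring.inverse (h₁ y)‖ ≤ (1 - ‖t0‖)⁻¹ := hfinal
    _ ≤ (1 - M)⁻¹ := hfinal2
    _ = (1 - ν) ^ 2 / psi ν := hfinal3
end
end

section
/- Let f : ℝⁿ → ℝⁿ be analytic with f(ζ) = 0 and Df(ζ) invertible; set γ = γ(f,ζ) and ν = ‖z - ζ‖·γ < 1 - √2/2. Then ‖Df(ζ)⁻¹(Df(z)(ζ - z) + f(z))‖ ≤ ν‖z - ζ‖/(1-ν)². -/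
noncomputable section

open Metric Filter

open Topology NNReal

/-- Lemma 3 (flat case): if `f(ζ) = 0`, `Df(ζ)` invertible and
`ν = ‖z-ζ‖γ(f,ζ) < 1-√2/2`, then
`‖Df(ζ)⁻¹(Df(z)(ζ-z) + f(z))‖ ≤ ν‖z-ζ‖/(1-ν)²`. -/
theorem linearization_error_bound {n : ℕ}
    (f : EuclideanSpace ℝ (Fin n) → EuclideanSpace ℝ (Fin n))
    (hf : ∀ w, AnalyticAt ℝ f w)
    (ζ z : EuclideanSpace ℝ (Fin n))
    (hζ : f ζ = 0)
    (hinv : IsUnit (fderiv ℝ f ζ))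
    (hfin : BddAbove (Set.range fun k : ℕ => smaleTerm f ζ (k + 2)))
    (hν : ‖z - ζ‖ * smaleGamma f ζ < 1 - Real.sqrt 2 / 2) :
    ‖dfInv f ζ (fderiv ℝ f z (ζ - z) + f z)‖ ≤
      (‖z - ζ‖ * smaleGamma f ζ) * ‖z - ζ‖ /
        (1 - ‖z - ζ‖ * smaleGamma f ζ) ^ 2 := by
  classical
  set A : EuclideanSpace ℝ (Fin n) →L[ℝ] EuclideanSpace ℝ (Fin n) := dfInv f ζ with hA
  set γ : ℝ := smaleGamma f ζ with hγdef
  set y : EuclideanSpace ℝ (Fin n) := z - ζ with hy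
  set ν : ℝ := ‖y‖ * γ with hνdef
  -- basic facts
  have hγ0 : 0 ≤ γ := by
    refine le_trans ?_ (le_ciSup hfin 0)
    exact Real.rpow_nonneg (div_nonneg (norm_nonneg _) (by positivity)) _
  have hν0 : 0 ≤ ν := mul_nonneg (norm_nonneg _) hγ0
  have hν1 : ν < 1 := by
    have h2 : (0:ℝ) < Real.sqrt 2 := Real.sqrt_pos.2 (by norm_num)
    have := hν; rw [hνdef]; dsimp only [y]; linarith
  have hfOn : AnalyticOnNhd ℝ f Set.univ := fun w _ => hf w
  have hcf : ContDiff ℝ ⊤ f := hfOn.contDiff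
  set g : EuclideanSpace ℝ (Fin n) → EuclideanSpace ℝ (Fin n) := (⇑A) ∘ f with hgdef
  have hg_an : ∀ w, AnalyticAt ℝ g w := fun w => (A.analyticAt (f w)).comp (hf w)
  have hgζ : g ζ = 0 := by simp [hgdef, hζ]
  have hitd : ∀ k : ℕ, iteratedFDeriv ℝ k g ζ
      = A.compContinuousMultilinearMap (iteratedFDeriv ℝ k f ζ) := by
    intro k
    exact A.iteratedFDeriv_comp_left hcf.contDiffAt le_top
  -- the Taylor series of g at ζ
  set p : FormalMultilinearSeries ℝ (EuclideanSpace ℝ (Fin n)) (EuclideanSpace ℝ (Fin n)) :=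
    (fun k => (k.factorial : ℝ)⁻¹ • iteratedFDeriv ℝ k g ζ) with hpdef
  have hpnormval : ∀ k : ℕ, ‖p k‖ ≤
      ‖A.compContinuousMultilinearMap (iteratedFDeriv ℝ k f ζ)‖ / (k.factorial : ℝ) := by
    intro k
    have h2 : p k = (k.factorial : ℝ)⁻¹ • A.compContinuousMultilinearMap (iteratedFDeriv ℝ k f ζ) := by
      rw [hpdef]; simp only [hitd k]
    rw [h2, div_eq_inv_mul]
    refine le_trans (ContinuousMultilinearMap.opNorm_smul_le _ _) ?_
    rw [norm_inv, Real.norm_natCast]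

  have hpnorm : ∀ m : ℕ, ‖p (m + 2)‖ ≤ γ ^ (m + 1) := by
    intro m
    set x : ℝ := ‖A.compContinuousMultilinearMap (iteratedFDeriv ℝ (m+2) f ζ)‖
      / ((m+2).factorial : ℝ) with hxdef
    have hx0 : 0 ≤ x := div_nonneg (norm_nonneg _) (by positivity)
    have hst : smaleTerm f ζ (m + 2) ≤ γ := le_ciSup hfin m
    have hstval : smaleTerm f ζ (m + 2) = x ^ ((1:ℝ)/((m:ℝ)+1)) := by
      rw [smaleTerm, ← hA, ← hxdef]
      norm_num
      ring_nf
    have key : x = (x ^ ((1:ℝ)/((m:ℝ)+1))) ^ ((m+1 : ℕ) : ℝ) := by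
      rw [← Real.rpow_mul hx0]
      push_cast
      rw [one_div_mul_cancel (by positivity : ((m:ℝ)+1) ≠ 0), Real.rpow_one]
    calc ‖p (m+2)‖ ≤ x := hpnormval (m+2)
      _ = (x ^ ((1:ℝ)/((m:ℝ)+1))) ^ ((m+1 : ℕ) : ℝ) := key
      _ ≤ γ ^ ((m+1 : ℕ) : ℝ) := by
          refine Real.rpow_le_rpow (Real.rpow_nonneg hx0 _) ?_ (by positivity)
          rw [← hstval]; exact hst
      _ = γ ^ (m + 1) := Real.rpow_natCast _ _
  -- radius of p
  have hrad : ∀ r : ℝ≥0, (r:ℝ) * γ ≤ 1 → (r : ENNReal) ≤ p.radius := by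
    intro r hr
    refine p.le_radius_of_bound (max (max ‖p 0‖ (‖p 1‖ * r)) r) ?_
    intro k
    match k with
    | 0 => simpa using le_max_of_le_left (le_max_left _ _)
    | 1 => simpa using le_max_of_le_left (le_max_right _ _)
    | (m+2) =>
      refine le_max_of_le_right ?_
      have h1 : ‖p (m+2)‖ * (r:ℝ) ^ (m+2) ≤ γ ^ (m+1) * (r:ℝ) ^ (m+2) := by
        apply mul_le_mul_of_nonneg_right (hpnorm m) (by positivity)
      have h2 : γ ^ (m+1) * (r:ℝ) ^ (m+2) = (γ * r) ^ (m+1) * r := by ring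
      have h3 : (γ * (r:ℝ)) ^ (m+1) ≤ 1 := by
        apply pow_le_one₀ (by positivity)
        rw [mul_comm]; exact hr
      calc ‖p (m+2)‖ * (r:ℝ) ^ (m+2) ≤ (γ * r) ^ (m+1) * r := by rw [← h2]; exact h1
        _ ≤ 1 * r := mul_le_mul_of_nonneg_right h3 r.coe_nonneg
        _ = r := one_mul _
  -- pick a radius ρ with ‖y‖ < ρ and ρ·γ ≤ 1
  obtain ⟨ρ, hρ0, hρ1, hρ2⟩ : ∃ ρ : ℝ, 0 < ρ ∧ ‖y‖ < ρ ∧ ρ * γ ≤ 1 := by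
    rcases eq_or_lt_of_le hγ0 with hγz | hγpos
    · exact ⟨‖y‖ + 1, by positivity, by linarith, by rw [← hγz]; simp⟩
    · have hyγ : ‖y‖ < 1/γ := by
        rw [lt_div_iff₀ hγpos]; exact lt_of_lt_of_le hν1 le_rfl
      refine ⟨(‖y‖ + 1/γ)/2, by positivity, by linarith, ?_⟩
      have : (‖y‖ + 1/γ)/2 * γ = (‖y‖ * γ + 1)/2 := by field_simp
      have hν1' : ‖y‖ * γ < 1 := by rw [← hνdef]; exact hν1
      rw [this]; linarith
  have hRpos : (0 : ENNReal) < ENNReal.ofReal ρ := by simp [ENNReal.ofReal_pos, hρ0]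
  have hR : ENNReal.ofReal ρ ≤ p.radius := by
    rw [ENNReal.ofReal]
    exact hrad ρ.toNNReal (by rw [Real.coe_toNNReal _ hρ0.le]; exact hρ2)
  -- the sum function G of the series
  set G : EuclideanSpace ℝ (Fin n) → EuclideanSpace ℝ (Fin n) := fun w => p.sum (w - ζ) with hGdef
  have hGball : HasFPowerSeriesOnBall G p ζ (ENNReal.ofReal ρ) := by
    have h0 := (p.hasFPowerSeriesOnBall (lt_of_lt_of_le hRpos hR)).comp_sub ζ
    rw [zero_add] at h0
    exact h0.mono hRpos hR
  -- g has the power series p locally (diagonal comparison with any local series)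
  obtain ⟨q, hq⟩ := hg_an ζ
  obtain ⟨r0, hq0⟩ := hq
  have hdiag : ∀ (k : ℕ) (v : EuclideanSpace ℝ (Fin n)), p k (fun _ => v) = q k (fun _ => v) := by
    intro k v
    have h1 := hq0.factorial_smul v k
    have h2 : p k (fun _ => v) = (k.factorial : ℝ)⁻¹ • (iteratedFDeriv ℝ k g ζ (fun _ => v)) := by
      rw [hpdef]; rfl
    rw [h2, ← h1, ← Nat.cast_smul_eq_nsmul ℝ, smul_smul,
      inv_mul_cancel₀ (Nat.cast_ne_zero.2 k.factorial_ne_zero), one_smul]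
  have hg_loc : HasFPowerSeriesOnBall g p ζ (min r0 (ENNReal.ofReal ρ)) :=
    { r_le := le_trans (min_le_right _ _) hR
      r_pos := lt_min hq0.r_pos hRpos
      hasSum := by
        intro w hw
        have : (fun k => p k (fun _ => w)) = fun k => q k (fun _ => w) := by
          funext k; exact hdiag k w
        rw [this]
        exact hq0.hasSum (EMetric.ball_subset_ball (min_le_left _ _) hw) }
  -- identity theorem: g = G on the ball of radius ρ
  have hev : g =ᶠ[𝓝 ζ] G := by
    filter_upwards [Metric.eball_mem_nhds ζ hg_loc.r_pos] with w hw
    have hw' : w - ζ ∈ Metric.eball (0:EuclideanSpace ℝ (Fin n)) (min r0 (ENNReal.ofReal ρ)) := by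
      simpa [Metric.mem_eball, edist_eq_enorm_sub, edist_zero_right] using hw
    have := hg_loc.sum hw'
    rw [add_sub_cancel] at this
    exact this
  have hUprecon : IsPreconnected (Metric.eball ζ (ENNReal.ofReal ρ)) := by
    rw [Metric.emetric_ball]
    exact (convex_ball ζ ρ).isPreconnected
  have hEqOn : Set.EqOn g G (Metric.eball ζ (ENNReal.ofReal ρ)) := by
    refine AnalyticOnNhd.eqOn_of_preconnected_of_eventuallyEq
      (fun w _ => hg_an w) hGball.analyticOnNhd hUprecon
      (Metric.mem_eball_self hRpos) hev
  have hzU : z ∈ Metric.eball ζ (ENNReal.ofReal ρ) := by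
    rw [Metric.emetric_ball, Metric.mem_ball, dist_eq_norm]
    exact hρ1
  have hgz : g z = G z := hEqOn hzU
  have hfdGg : fderiv ℝ g z = fderiv ℝ G z :=
    (Filter.eventuallyEq_of_mem (Metric.isOpen_eball.mem_nhds hzU) hEqOn).fderiv_eq
  have hyball : y ∈ Metric.eball (0:EuclideanSpace ℝ (Fin n)) (ENNReal.ofReal ρ) := by
    rw [Metric.emetric_ball, Metric.mem_ball, dist_zero_right]
    exact hρ1
  have hζy : ζ + y = z := by rw [hy]; abel
  -- the sums
  set a : ℕ → EuclideanSpace ℝ (Fin n) := fun k => p k (fun _ => y) with hadef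
  have S1 : HasSum a (g z) := by
    have := hGball.hasSum hyball
    rwa [hζy, ← hgz] at this
  have S2 : HasSum (fun k => (k+1) • a (k+1)) (fderiv ℝ g z y) := by
    have h0 := (ContinuousLinearMap.apply ℝ (EuclideanSpace ℝ (Fin n)) y).hasSum (hGball.fderiv.hasSum hyball)
    simp only [ContinuousLinearMap.apply_apply, p.derivSeries_apply_diag] at h0
    rwa [hζy, ← hfdGg] at h0
  have ha0 : a 0 = 0 := by
    have : p 0 (fun _ => y) = (Nat.factorial 0 : ℝ)⁻¹ • (iteratedFDeriv ℝ 0 g ζ (fun _ => y)) := by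
      rw [hpdef]; rfl
    rw [hadef]; simp only [this, iteratedFDeriv_zero_apply, hgζ, smul_zero]
  have S1' : HasSum (fun k => a (k+1)) (g z) := by
    refine (_root_.hasSum_nat_add_iff 1).2 ?_
    simpa [Finset.range_one, ha0] using S1
  have hQsum : HasSum (fun k => a (k+1) - (k+1) • a (k+1)) (g z - fderiv ℝ g z y) :=
    S1'.sub S2
  -- rewrite the left-hand side
  have hdifff : DifferentiableAt ℝ f z := (hf z).differentiableAt
  have hAfd : fderiv ℝ g z = A.comp (fderiv ℝ f z) :=
    (A.hasFDerivAt.comp z hdifff.hasFDerivAt).fderiv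
  have hLHS : dfInv f ζ (fderiv ℝ f z (ζ - z) + f z) = g z - fderiv ℝ g z y := by
    have hζz : ζ - z = -y := by rw [hy]; abel
    rw [← hA, map_add, hζz, map_neg, map_neg, hAfd]
    have : A ((fderiv ℝ f z) y) = (A.comp (fderiv ℝ f z)) y := rfl
    rw [this]
    have : A (f z) = g z := rfl
    rw [this]
    abel
  -- termwise norm bound
  have hab : ∀ k : ℕ, ‖a (k+2)‖ ≤ γ ^ (k+1) * ‖y‖ ^ (k+2) := by
    intro k
    calc ‖a (k+2)‖ ≤ ‖p (k+2)‖ * ∏ _i : Fin (k+2), ‖y‖ :=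
          (p (k+2)).le_opNorm _
      _ = ‖p (k+2)‖ * ‖y‖ ^ (k+2) := by
          rw [Finset.prod_const, Finset.card_univ, Fintype.card_fin]
      _ ≤ γ ^ (k+1) * ‖y‖ ^ (k+2) :=
          mul_le_mul_of_nonneg_right (hpnorm k) (by positivity)
  have hcb : ∀ k : ℕ, ‖a (k+1) - (k+1) • a (k+1)‖ ≤ ‖y‖ * ((k:ℝ) * ν ^ k) := by
    intro k
    match k with
    | 0 => simp
    | (m+1) =>
      have h1 : a (m+2) - (m+2) • a (m+2) = -((m+1) • a (m+2)) := by
        rw [succ_nsmul]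
        abel
      rw [h1, norm_neg, ← Nat.cast_smul_eq_nsmul ℝ, norm_smul, Real.norm_natCast]
      calc ((m+1 : ℕ) : ℝ) * ‖a (m+2)‖ ≤ ((m+1 : ℕ) : ℝ) * (γ ^ (m+1) * ‖y‖ ^ (m+2)) :=
            mul_le_mul_of_nonneg_left (hab m) (by positivity)
        _ = ‖y‖ * (((m+1 : ℕ) : ℝ) * (‖y‖ * γ) ^ (m+1)) := by
            rw [mul_pow]; push_cast; ring
        _ = ‖y‖ * (((m+1 : ℕ) : ℝ) * ν ^ (m+1)) := by rw [hνdef]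
  -- sum up
  have hmaj : HasSum (fun k : ℕ => ‖y‖ * ((k:ℝ) * ν ^ k)) (‖y‖ * (ν / (1-ν)^2)) := by
    refine HasSum.mul_left _ ?_
    exact hasSum_coe_mul_geometric_of_norm_lt_one
      (by rw [Real.norm_eq_abs, abs_of_nonneg hν0]; exact hν1)
  have hsn : Summable (fun k => ‖a (k+1) - (k+1) • a (k+1)‖) :=
    Summable.of_nonneg_of_le (fun _ => norm_nonneg _) hcb hmaj.summable
  have hple : ‖dfInv f ζ (fderiv ℝ f z (ζ - z) + f z)‖ ≤ ‖y‖ * (ν / (1-ν)^2) := by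
    rw [hLHS, ← hQsum.tsum_eq]
    calc ‖∑' k, (a (k+1) - (k+1) • a (k+1))‖ ≤ ∑' k, ‖a (k+1) - (k+1) • a (k+1)‖ :=
          norm_tsum_le_tsum_norm hsn
      _ ≤ ∑' k : ℕ, ‖y‖ * ((k:ℝ) * ν ^ k) := Summable.tsum_le_tsum hcb hsn hmaj.summable
      _ = ‖y‖ * (ν / (1-ν)^2) := hmaj.tsum_eq
  calc ‖dfInv f ζ (fderiv ℝ f z (ζ - z) + f z)‖ ≤ ‖y‖ * (ν / (1-ν)^2) := hple
    _ = ν * ‖y‖ / (1-ν)^2 := by ring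
end
end

section
/- Let f : ℝⁿ → ℝⁿ be analytic with f(ζ) = 0 and Df(ζ) invertible, and let ν = ‖z - ζ‖·γ(f,ζ) < 1 - √2/2. Then Df(z) is invertible and the Newton iterate N_f(z) = z - Df(z)⁻¹f(z) satisfies ‖N_f(z) - ζ‖ ≤ ν‖z - ζ‖/ψ(ν), where ψ(ν) = 1 - 4ν + 2ν². -/
noncomputable section

open Metric Filter
open scoped ENNReal NNReal Topology

section AuxiliaryLemmas

variable {E F : Type*} [NormedAddCommGroup E] [NormedSpace ℝ E]
  [NormedAddCommGroup F] [NormedSpace ℝ F]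

lemma ringInverse_eq_of_mul {M : Type*} [MonoidWithZero M] {a b : M} (h1 : a * b = 1)
    (h2 : b * a = 1) : Ring.inverse a = b := by
  have h : a = ((⟨a, b, h1, h2⟩ : Mˣ) : M) := rfl
  rw [h, Ring.inverse_unit]; rfl

lemma norm_derivSeries_le (q : FormalMultilinearSeries ℝ E F) (m : ℕ) :
    ‖q.derivSeries m‖ ≤ ((m : ℝ) + 1) * ‖q (m + 1)‖ := by
  have h1 : ‖q.derivSeries m‖ ≤ 1 * ‖q.changeOriginSeries 1 m‖ := by
    refine (ContinuousLinearMap.norm_compContinuousMultilinearMap_le _ _).trans ?_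
    gcongr
    exact ContinuousLinearMap.opNorm_le_bound _ zero_le_one (by simp)
  rw [one_mul] at h1
  refine h1.trans ?_
  have hcard : Fintype.card {s : Finset (Fin (1 + m)) // s.card = m} = m + 1 := by
    rw [Fintype.card_subtype, ← Finset.powerset_univ, ← Finset.powersetCard_eq_filter,
      Finset.card_powersetCard]
    simp [add_comm 1 m, Nat.choose_succ_self_right]
  have h2 : ‖q.changeOriginSeries 1 m‖ ≤
      (Fintype.card {s : Finset (Fin (1 + m)) // s.card = m} : ℝ) * ‖q (1 + m)‖ := by
    refine (norm_sum_le Finset.univ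
      (fun s : {s : Finset (Fin (1 + m)) // s.card = m} =>
        q.changeOriginSeriesTerm 1 m s.1 s.2)).trans ?_
    rw [Finset.sum_congr rfl (fun s _ => q.norm_changeOriginSeriesTerm 1 m s.1 s.2),
      Finset.sum_const, Finset.card_univ, nsmul_eq_mul]
  rw [hcard] at h2
  refine h2.trans ?_
  rw [add_comm 1 m]
  push_cast
  exact le_rfl

lemma hasFPowerSeriesOnBall_taylor [CompleteSpace E] [CompleteSpace F]
    (g : E → F) (hg : ∀ w, AnalyticAt ℝ g w) (ζ : E)
    (q : FormalMultilinearSeries ℝ E F)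
    (hqdef : ∀ n, q n = (n.factorial : ℝ)⁻¹ • iteratedFDeriv ℝ n g ζ)
    {s : ℝ} (hs : 0 < s) (hrad : ENNReal.ofReal s ≤ q.radius) :
    HasFPowerSeriesOnBall g q ζ (ENNReal.ofReal s) := by
  obtain ⟨p, hp⟩ := hg ζ
  obtain ⟨rp, hpb⟩ := hp
  have hspos : (0 : ℝ≥0∞) < ENNReal.ofReal s := by simpa using hs
  -- small ball: g is the sum of q near ζ
  have hqsmall : HasFPowerSeriesOnBall g q ζ (min rp (ENNReal.ofReal s)) := by
    refine ⟨(min_le_right _ _).trans hrad, lt_min hpb.r_pos hspos, fun {y} hy => ?_⟩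
    have hy' : y ∈ EMetric.ball (0 : E) rp :=
      EMetric.ball_subset_ball (min_le_left _ _) hy
    have := hpb.hasSum_iteratedFDeriv hy'
    convert this using 2 with n
    rw [hqdef n, ContinuousMultilinearMap.smul_apply]
  -- the shifted sum function
  set G : E → F := fun w => q.sum (w - ζ) with hGdef
  have hG : HasFPowerSeriesOnBall G q ζ (ENNReal.ofReal s) := by
    refine ⟨hrad, hspos, fun {y} hy => ?_⟩
    have hy' : y ∈ EMetric.ball (0 : E) q.radius := EMetric.ball_subset_ball hrad hy
    have := q.hasSum hy'
    simpa [hGdef] using this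
  have hEq : Set.EqOn g G (Metric.ball ζ s) := by
    have hgOn : AnalyticOnNhd ℝ g (Metric.ball ζ s) := fun w _ => hg w
    have hGOn : AnalyticOnNhd ℝ G (Metric.ball ζ s) := by
      intro w hw
      exact hG.analyticAt_of_mem (by rwa [Metric.emetric_ball])
    refine hgOn.eqOn_of_preconnected_of_eventuallyEq hGOn
      (convex_ball ζ s).isPreconnected (mem_ball_self hs) ?_
    have hopen : EMetric.ball ζ (min rp (ENNReal.ofReal s)) ∈ 𝓝 ζ :=
      EMetric.isOpen_ball.mem_nhds (EMetric.mem_ball_self hqsmall.r_pos)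
    filter_upwards [hopen] with w hw
    have hwy : w - ζ ∈ Metric.eball (0 : E) (min rp (ENNReal.ofReal s)) := by
      rwa [Metric.mem_eball, edist_eq_enorm_sub, sub_zero, ← edist_eq_enorm_sub,
        ← Metric.mem_eball]
    have h1 := hqsmall.sum hwy
    have h2 := hG.sum (EMetric.ball_subset_ball (min_le_right _ _) hwy)
    rw [add_sub_cancel] at h1 h2
    rw [h1, h2]
  exact ⟨hrad, hspos, fun {y} hy => by
    rw [show g (ζ + y) = G (ζ + y) from hEq (by
      rw [← Metric.emetric_ball (x := ζ) (ε := s)]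
      simpa [edist_eq_enorm_sub] using hy)]
    exact hG.hasSum hy⟩

end AuxiliaryLemmas

set_option maxHeartbeats 2000000
set_option synthInstance.maxHeartbeats 400000

/-- Lemma 4 (flat case): if `f(ζ) = 0`, `Df(ζ)` invertible and
`ν = ‖z-ζ‖γ(f,ζ) < 1-√2/2`, then `Df(z)` is invertible and the Newton iterate
satisfies `‖N_f(z) - ζ‖ ≤ ν‖z-ζ‖/ψ(ν)`. -/
theorem newton_step_bound {n : ℕ}
    (f : EuclideanSpace ℝ (Fin n) → EuclideanSpace ℝ (Fin n))
    (hf : ∀ w, AnalyticAt ℝ f w)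
    (ζ z : EuclideanSpace ℝ (Fin n))
    (hζ : f ζ = 0)
    (hinv : IsUnit (fderiv ℝ f ζ))
    (hfin : BddAbove (Set.range fun k : ℕ => smaleTerm f ζ (k + 2)))
    (hν : ‖z - ζ‖ * smaleGamma f ζ < 1 - Real.sqrt 2 / 2) :
    IsUnit (fderiv ℝ f z) ∧
      ‖newton f z - ζ‖ ≤
        (‖z - ζ‖ * smaleGamma f ζ) * ‖z - ζ‖ /
          psi (‖z - ζ‖ * smaleGamma f ζ) := by
  classical
  set γ : ℝ := smaleGamma f ζ with hγdef
  set r : ℝ := ‖z - ζ‖ with hrdef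
  set u : ℝ := r * γ with hudef
  set A := dfInv f ζ with hAdef
  set g : EuclideanSpace ℝ (Fin n) → EuclideanSpace ℝ (Fin n) := fun w => A (f w) with hgdef
  -- basic numeric facts
  have hsqrt2 : (0:ℝ) < Real.sqrt 2 := Real.sqrt_pos.2 (by norm_num)
  have hsq2 : (Real.sqrt 2) ^ 2 = 2 := Real.sq_sqrt (by norm_num)
  have hr0 : 0 ≤ r := norm_nonneg _
  have hterm_nonneg : ∀ k, 0 ≤ smaleTerm f ζ k := fun k =>
    Real.rpow_nonneg (div_nonneg (norm_nonneg _) (Nat.cast_nonneg _)) _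
  have hγ0 : 0 ≤ γ := le_trans (hterm_nonneg 2) (le_ciSup hfin 0)
  have hu0 : 0 ≤ u := mul_nonneg hr0 hγ0
  have huν : u < 1 - Real.sqrt 2 / 2 := hν
  have hu1 : u < 1 := by nlinarith
  have h1u : (0:ℝ) < 1 - u := by linarith
  have hψ : 0 < psi u := by unfold psi; nlinarith
  clear_value γ r u
  -- derivative facts
  have hADζ : A * fderiv ℝ f ζ = 1 := Ring.inverse_mul_cancel _ hinv
  have hDζA : fderiv ℝ f ζ * A = 1 := Ring.mul_inverse_cancel _ hinv
  have hganal : ∀ w, AnalyticAt ℝ g w := fun w => (A.analyticAt (f w)).comp (hf w)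
  have hfc : ContDiff ℝ (⊤ : WithTop ℕ∞) f :=
    contDiff_iff_contDiffAt.2 fun w => (hf w).contDiffAt
  have hfderivg : ∀ w, fderiv ℝ g w = A.comp (fderiv ℝ f w) := by
    intro w
    have := (A.hasFDerivAt (x := f w)).comp w ((hf w).differentiableAt.hasFDerivAt)
    exact this.fderiv
  have hgζ : g ζ = 0 := by rw [hgdef]; simp [hζ]
  -- the Taylor series of g at ζ
  set q : FormalMultilinearSeries ℝ (EuclideanSpace ℝ (Fin n)) (EuclideanSpace ℝ (Fin n)) :=
    fun k => (k.factorial : ℝ)⁻¹ • iteratedFDeriv ℝ k g ζ with hqdef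
  have hiter : ∀ k : ℕ, iteratedFDeriv ℝ k g ζ
      = A.compContinuousMultilinearMap (iteratedFDeriv ℝ k f ζ) := by
    intro k
    have := A.iteratedFDeriv_comp_left (hfc.contDiffAt (x := ζ)) (i := k) le_top
    exact this
  have hqnorm : ∀ k : ℕ, ‖q k‖ =
      ‖A.compContinuousMultilinearMap (iteratedFDeriv ℝ k f ζ)‖ / (k.factorial : ℝ) := by
    intro k
    rw [hqdef]
    show ‖(k.factorial : ℝ)⁻¹ • iteratedFDeriv ℝ k g ζ‖ = _
    rw [hiter k, norm_smul, norm_inv, Real.norm_natCast, inv_mul_eq_div]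
  have hterm_eq : ∀ k : ℕ, smaleTerm f ζ k = ‖q k‖ ^ ((1:ℝ) / ((k:ℝ) - 1)) := by
    intro k; rw [smaleTerm, hqnorm k]
  have hqk : ∀ k : ℕ, 2 ≤ k → ‖q k‖ ≤ γ ^ (k - 1) := by
    intro k hk
    obtain ⟨j, rfl⟩ : ∃ j, k = j + 2 := ⟨k - 2, by omega⟩
    have hterm : smaleTerm f ζ (j + 2) ≤ γ := by
      rw [hγdef]; exact le_ciSup hfin j
    have he : ((j + 2 : ℕ) : ℝ) - 1 = ((j + 1 : ℕ) : ℝ) := by push_cast; ring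
    have hne : ((j + 1 : ℕ) : ℝ) ≠ 0 := by positivity
    have hb0 : (0:ℝ) ≤ ‖q (j + 2)‖ := norm_nonneg _
    have key : ‖q (j + 2)‖ = smaleTerm f ζ (j + 2) ^ ((j + 1 : ℕ) : ℝ) := by
      rw [hterm_eq, he, ← Real.rpow_mul hb0, one_div_mul_cancel hne, Real.rpow_one]
    calc ‖q (j+2)‖ = smaleTerm f ζ (j+2) ^ ((j+1:ℕ):ℝ) := key
      _ ≤ γ ^ ((j+1:ℕ):ℝ) := Real.rpow_le_rpow (hterm_nonneg _) hterm (Nat.cast_nonneg _)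
      _ = γ ^ (j+1) := Real.rpow_natCast γ (j+1)
      _ = γ ^ (j+2-1) := rfl
  -- q 0 = 0
  have hq0 : q 0 = 0 := by
    rw [hqdef]
    show (Nat.factorial 0 : ℝ)⁻¹ • iteratedFDeriv ℝ 0 g ζ = 0
    have hz : iteratedFDeriv ℝ 0 g ζ = 0 := by
      ext1 m
      simp [iteratedFDeriv_zero_apply, hgζ]
    rw [hz, smul_zero]
  clear_value A g q
  -- choose s with r < s and s * γ ≤ 1
  set s : ℝ := r + (1 - u) / (γ + 1) with hsdef
  have hγ1 : (0:ℝ) < γ + 1 := by linarith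
  have hrs : r < s := by
    have : 0 < (1 - u) / (γ + 1) := div_pos h1u hγ1
    rw [hsdef]; linarith
  have hs0 : 0 < s := lt_of_le_of_lt hr0 hrs
  have hsγ : s * γ ≤ 1 := by
    rw [hsdef]
    have h1 : (1 - u) / (γ + 1) * γ ≤ (1 - u) := by
      rw [div_mul_eq_mul_div, div_le_iff₀ hγ1]
      nlinarith
    calc (r + (1 - u)/(γ+1)) * γ = r * γ + (1-u)/(γ+1) * γ := by ring
      _ ≤ u + (1 - u) := by rw [← hudef]; linarith
      _ = 1 := by ring
  clear_value s
  -- radius bound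
  have hrad : ENNReal.ofReal s ≤ q.radius := by
    have hcoe : (s.toNNReal : ℝ≥0∞) ≤ q.radius := by
      apply q.le_radius_of_bound (max s (‖q 1‖ * s))
      intro k
      have hsc : ((s.toNNReal : ℝ≥0) : ℝ) = s := Real.coe_toNNReal s hs0.le
      rw [hsc]
      match k with
      | 0 =>
        rw [hq0]
        simpa using le_max_of_le_left hs0.le
      | 1 =>
        rw [pow_one]
        exact le_max_right _ _
      | (m+2) =>
        have h2 : ‖q (m+2)‖ * s^(m+2) ≤ s := by
          have hb := hqk (m+2) (by omega)
          calc ‖q (m+2)‖ * s^(m+2) ≤ γ^(m+1) * s^(m+2) := by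
                exact mul_le_mul_of_nonneg_right hb (by positivity)
            _ = (s*γ)^(m+1) * s := by ring
            _ ≤ 1^(m+1) * s := by
                apply mul_le_mul_of_nonneg_right _ hs0.le
                exact pow_le_pow_left₀ (mul_nonneg hs0.le hγ0) hsγ _
            _ = s := by rw [one_pow, one_mul]
        exact h2.trans (le_max_left _ _)
    exact hcoe
  have hq_ball : HasFPowerSeriesOnBall g q ζ (ENNReal.ofReal s) :=
    hasFPowerSeriesOnBall_taylor g hganal ζ q (fun k => by rw [hqdef]) hs0 hrad
  set y := z - ζ with hydef
  have hyr : ‖y‖ = r := by rw [hydef, hrdef]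
  have hymem : y ∈ Metric.eball (0 : EuclideanSpace ℝ (Fin n)) (ENNReal.ofReal s) := by
    rw [Metric.emetric_ball, mem_ball_zero_iff, hyr]
    exact hrs
  clear_value y
  have hζy : ζ + y = z := by rw [hydef]; abel
  have h1 : HasSum (fun k => q k (fun _ => y)) (g z) := by
    have := hq_ball.hasSum hymem; rwa [hζy] at this
  have hDs := hq_ball.fderiv
  have h2 : HasSum (fun m => q.derivSeries m (fun _ => y)) (fderiv ℝ g z) := by
    have := hDs.hasSum hymem; rwa [hζy] at this
  have hS0 : q.derivSeries 0 (fun _ => y) = 1 := by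
    have h2' : HasSum (fun m => q.derivSeries m (fun _ => (0:EuclideanSpace ℝ (Fin n))))
        (fderiv ℝ g ζ) := by
      have := hDs.hasSum (EMetric.mem_ball_self hq_ball.r_pos)
      rwa [add_zero] at this
    have hsingle : HasSum (fun m => q.derivSeries m (fun _ => (0:EuclideanSpace ℝ (Fin n))))
        (q.derivSeries 0 (fun _ => 0)) := by
      apply hasSum_single 0
      intro m hm
      exact (q.derivSeries m).map_coord_zero ⟨0, Nat.pos_of_ne_zero hm⟩ rfl
    have hone : fderiv ℝ g ζ = 1 := by rw [hfderivg ζ]; exact hADζ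
    have huniq := h2'.unique hsingle
    rw [show (fun _ : Fin 0 => y) = (fun _ : Fin 0 => (0:EuclideanSpace ℝ (Fin n))) from
      funext (fun i => i.elim0), ← huniq, hone]
  -- tail of the derivative series
  have h3 : HasSum (fun m => q.derivSeries (m+1) (fun _ => y)) (fderiv ℝ g z - 1) := by
    have h := (hasSum_nat_add_iff' (f := fun m => q.derivSeries m (fun _ => y)) 1).2 h2
    simpa [hS0] using h
  -- numeric series
  have hunorm : ‖u‖ < 1 := by rw [Real.norm_eq_abs, abs_of_nonneg hu0]; exact hu1
  have hA0 : HasSum (fun m : ℕ => (m:ℝ) * u^m) (u/(1-u)^2) :=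
    hasSum_coe_mul_geometric_of_norm_lt_one hunorm
  have hA' : HasSum (fun m : ℕ => ((m:ℝ)+1) * u^(m+1)) (u/(1-u)^2) := by
    have h' := (hasSum_nat_add_iff' (f := fun m : ℕ => (m:ℝ) * u^m) 1).2 hA0
    simp only [Finset.range_one, Finset.sum_singleton, Nat.cast_zero, zero_mul, pow_zero,
      sub_zero, Nat.cast_add, Nat.cast_one] at h'
    exact h'
  have hB' : HasSum (fun m : ℕ => u^(m+1)) ((1-u)⁻¹ - 1) := by
    have hB0 := hasSum_geometric_of_lt_one hu0 hu1
    have h' := (hasSum_nat_add_iff' (f := fun m : ℕ => u^m) 1).2 hB0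
    simpa using h'
  set c : ℝ := u/(1-u)^2 + ((1-u)⁻¹ - 1) with hcdef
  have hc : HasSum (fun m : ℕ => ((m:ℝ)+2) * u^(m+1)) c := by
    have hadd := hA'.add hB'
    convert hadd using 2 with m
    ring
  clear_value c
  have hc1 : 1 - c = psi u / (1-u)^2 := by
    rw [hcdef, psi]
    field_simp
    ring
  have hc0 : 0 ≤ c := by
    rw [hcdef]
    have hv0 : (0:ℝ) ≤ (1-u)⁻¹ := inv_nonneg.2 h1u.le
    have hv : (1-u) * (1-u)⁻¹ = 1 := mul_inv_cancel₀ h1u.ne'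
    have hv1 : (1:ℝ) ≤ (1-u)⁻¹ := by nlinarith [mul_nonneg hu0 hv0]
    have : (0:ℝ) ≤ u/(1-u)^2 := div_nonneg hu0 (by positivity)
    linarith
  have hclt : c < 1 := by
    have hpos : 0 < psi u / (1-u)^2 := div_pos hψ (by positivity)
    linarith [hc1]
  -- operator norm bound on fderiv g z - 1
  have hterm_bound : ∀ m : ℕ, ‖q.derivSeries (m+1) (fun _ => y)‖ ≤ ((m:ℝ)+2) * u^(m+1) := by
    intro m
    have e1 : ‖q.derivSeries (m+1) (fun _ => y)‖ ≤ ‖q.derivSeries (m+1)‖ * r^(m+1) := by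
      have he := (q.derivSeries (m+1)).le_opNorm (fun _ => y)
      rwa [Finset.prod_const, Finset.card_univ, Fintype.card_fin, hyr] at he
    have e2 := norm_derivSeries_le q (m+1)
    have e3 : ‖q (m+1+1)‖ ≤ γ^(m+1) := hqk (m+2) (by omega)
    have e4 : (0:ℝ) ≤ r^(m+1) := by positivity
    calc ‖q.derivSeries (m+1) (fun _ => y)‖ ≤ ‖q.derivSeries (m+1)‖ * r^(m+1) := e1
      _ ≤ (((m+1:ℕ):ℝ)+1) * ‖q (m+1+1)‖ * r^(m+1) := by
          apply mul_le_mul_of_nonneg_right e2 e4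
      _ ≤ (((m+1:ℕ):ℝ)+1) * γ^(m+1) * r^(m+1) := by
          apply mul_le_mul_of_nonneg_right _ e4
          apply mul_le_mul_of_nonneg_left e3 (by positivity)
      _ = ((m:ℝ)+2) * u^(m+1) := by rw [hudef]; push_cast; ring
  have hDg1 : ‖fderiv ℝ g z - 1‖ ≤ c := by
    rw [← h3.tsum_eq]
    exact tsum_of_norm_bounded hc hterm_bound
  -- invertibility
  set Dg := fderiv ℝ g z with hDgz
  set t := (1 : EuclideanSpace ℝ (Fin n) →L[ℝ] EuclideanSpace ℝ (Fin n)) - Dg with htdef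
  have ht : ‖t‖ ≤ c := by rw [htdef, norm_sub_rev]; exact hDg1
  have htlt : ‖t‖ < 1 := lt_of_le_of_lt ht hclt
  have h1t : (1 : EuclideanSpace ℝ (Fin n) →L[ℝ] EuclideanSpace ℝ (Fin n)) - t = Dg :=
    sub_sub_cancel _ _
  have hDgunit : IsUnit Dg := by
    have hh := isUnit_one_sub_of_norm_lt_one htlt
    rwa [h1t] at hh
  have hDgA : Dg = A * fderiv ℝ f z := by rw [hDgz, hfderivg z]; rfl
  have hDzfac : fderiv ℝ f z = fderiv ℝ f ζ * Dg := by
    rw [hDgA, ← mul_assoc, hDζA, one_mul]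
  have hDzunit : IsUnit (fderiv ℝ f z) := by
    rw [hDzfac]; exact hinv.mul hDgunit
  -- inverse norm bound
  have hJ : Ring.inverse Dg = ∑' m : ℕ, t^m := by
    have hh := geom_series_eq_inverse t htlt
    rw [h1t] at hh
    exact hh.symm
  have hJnorm : ‖Ring.inverse Dg‖ ≤ (1-c)⁻¹ := by
    rw [hJ]
    refine tsum_of_norm_bounded (hasSum_geometric_of_lt_one hc0 hclt) ?_
    intro m
    match m with
    | 0 =>
      rw [pow_zero, pow_zero, ContinuousLinearMap.one_def]
      exact ContinuousLinearMap.norm_id_le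
    | (m+1) =>
      calc ‖t^(m+1)‖ ≤ ‖t‖^(m+1) := norm_pow_le' t (Nat.succ_pos m)
        _ ≤ c^(m+1) := pow_le_pow_left₀ (norm_nonneg _) ht _
  -- Newton step identity
  have hRinv : Ring.inverse (fderiv ℝ f z) = Ring.inverse Dg * A := by
    apply ringInverse_eq_of_mul
    · rw [hDzfac, mul_assoc, ← mul_assoc Dg, Ring.mul_inverse_cancel _ hDgunit, one_mul, hDζA]
    · rw [mul_assoc, ← hDgA, Ring.inverse_mul_cancel _ hDgunit]
  have hIy : (Ring.inverse Dg) (Dg y) = y := by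
    have hh : ((Ring.inverse Dg) * Dg) y = y := by
      rw [Ring.inverse_mul_cancel _ hDgunit]; rfl
    rwa [ContinuousLinearMap.mul_apply] at hh
  have hNewton : newton f z - ζ = (Ring.inverse Dg) (Dg y - g z) := by
    rw [newton, dfInv, hRinv]
    have happ : (Ring.inverse Dg * A) (f z) = (Ring.inverse Dg) (g z) := by
      rw [ContinuousLinearMap.mul_apply, hgdef]
    calc z - (Ring.inverse Dg * A) (f z) - ζ
        = y - (Ring.inverse Dg) (g z) := by rw [happ, hydef]; abel
      _ = (Ring.inverse Dg) (Dg y) - (Ring.inverse Dg) (g z) := by rw [hIy]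
      _ = (Ring.inverse Dg) (Dg y - g z) := (map_sub _ _ _).symm
  -- bound on the residual
  have hsum2 : HasSum (fun m => q (m+1) (fun _ => y)) (g z) := by
    have h' := (hasSum_nat_add_iff' (f := fun k => q k (fun _ => y)) 1).2 h1
    simpa [hq0] using h'
  have h4 : HasSum (fun m => q.derivSeries m (fun _ => y) y) (Dg y) := by
    have hh := h2.mapL (ContinuousLinearMap.apply ℝ (EuclideanSpace ℝ (Fin n)) y)
    simpa using hh
  have h4' : HasSum (fun m : ℕ => (m+1) • q (m+1) (fun _ => y)) (Dg y) := by
    convert h4 using 2 with m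
    exact (q.derivSeries_apply_diag m y).symm
  have h6 : HasSum (fun m : ℕ => m • q (m+1) (fun _ => y)) (Dg y - g z) := by
    have hh := h4'.sub hsum2
    convert hh using 2 with m
    rw [succ_nsmul]
    abel
  have hbound6 : ∀ m : ℕ, ‖m • q (m+1) (fun _ => y)‖ ≤ (m:ℝ) * u^m * r := by
    intro m
    match m with
    | 0 => simp
    | (m+1) =>
      have e1 : ‖q (m+2) (fun _ => y)‖ ≤ γ^(m+1) * r^(m+2) := by
        have he := (q (m+2)).le_opNorm (fun _ => y)
        simp only [hyr, Finset.prod_const, Finset.card_univ, Fintype.card_fin] at he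
        refine he.trans ?_
        exact mul_le_mul_of_nonneg_right (hqk (m+2) (by omega)) (by positivity)
      calc ‖(m+1) • q (m+2) (fun _ => y)‖ ≤ ((m:ℝ)+1) * ‖q (m+2) (fun _ => y)‖ := by
            have := norm_nsmul_le (n := m+1) (a := q (m+2) (fun _ => y))
            push_cast at this ⊢
            exact this
        _ ≤ ((m:ℝ)+1) * (γ^(m+1) * r^(m+2)) := by
            apply mul_le_mul_of_nonneg_left e1 (by positivity)
        _ = ((m+1:ℕ):ℝ) * u^(m+1) * r := by rw [hudef]; push_cast; ring
  have hresid : ‖Dg y - g z‖ ≤ u/(1-u)^2 * r := by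
    rw [← h6.tsum_eq]
    exact tsum_of_norm_bounded (hA0.mul_right r) hbound6
  -- conclusion
  refine ⟨hDzunit, ?_⟩
  have hfinal : ‖newton f z - ζ‖ ≤ (1-c)⁻¹ * (u/(1-u)^2 * r) := by
    rw [hNewton]
    refine (ContinuousLinearMap.le_opNorm _ _).trans ?_
    have hinv0 : (0:ℝ) ≤ (1-c)⁻¹ := by
      have : 0 < 1 - c := by linarith
      positivity
    exact mul_le_mul hJnorm hresid (norm_nonneg _) hinv0
  have heq : (1-c)⁻¹ * (u/(1-u)^2 * r) = u * r / psi u := by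
    have h1 : (1:ℝ) - c = psi u / (1-u)^2 := hc1
    rw [h1]
    rw [inv_div]
    field_simp
  exact hfinal.trans (le_of_eq heq)
end
end

section
/- Let f : ℝⁿ → ℝⁿ be analytic, z ∈ ℝⁿ with Df(z) invertible, and let z₁ be any point with ν = ‖z - z₁‖·γ(f,z) < 1 - √2/2. Then γ(f,z₁) ≤ γ(f,z) / ((1-ν)·ψ(ν)), where ψ(ν) = 1 - 4ν + 2ν². -/
noncomputable section

open Metric Filter

open Set
open scoped NNReal ENNReal


private lemma norm_itfd_itfd {E F : Type*} [NormedAddCommGroup E] [NormedSpace ℝ E]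
    [NormedAddCommGroup F] [NormedSpace ℝ F] (g : E → F) :
    ∀ (l k : ℕ) (x : E), ‖iteratedFDeriv ℝ l (iteratedFDeriv ℝ k g) x‖ =
      ‖iteratedFDeriv ℝ (k + l) g x‖ := by
  intro l
  induction l with
  | zero => intro k x; simp [norm_iteratedFDeriv_zero]
  | succ l ih =>
    intro k x
    have h1 : ‖iteratedFDeriv ℝ (l + 1) (iteratedFDeriv ℝ k g) x‖
        = ‖iteratedFDeriv ℝ l (fderiv ℝ (iteratedFDeriv ℝ k g)) x‖ :=
      (norm_iteratedFDeriv_fderiv (f := iteratedFDeriv ℝ k g) (x := x)).symm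
    rw [h1, fderiv_iteratedFDeriv,
      LinearIsometryEquiv.norm_iteratedFDeriv_comp_left _ _ x l, ih (k + 1) x]
    have : k + 1 + l = k + (l + 1) := by omega
    rw [this]

private lemma itfd_translate {E F : Type*} [NormedAddCommGroup E] [NormedSpace ℝ E]
    [NormedAddCommGroup F] [NormedSpace ℝ F] (H : E → F)
    (hd : ∀ m, Differentiable ℝ (iteratedFDeriv ℝ m H)) (c : E) :
    ∀ (l : ℕ) (x : E),
      iteratedFDeriv ℝ l (fun w => H (c + w)) x = iteratedFDeriv ℝ l H (c + x) := by
  intro l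
  induction l with
  | zero => intro x; ext m; simp
  | succ l ih =>
    intro x
    have hfun : iteratedFDeriv ℝ l (fun w => H (c + w))
        = fun x => iteratedFDeriv ℝ l H (c + x) := funext ih
    rw [iteratedFDeriv_succ_eq_comp_left, iteratedFDeriv_succ_eq_comp_left]
    simp only [Function.comp_apply]
    congr 1
    rw [hfun]
    have h2 : HasFDerivAt (fun x : E => iteratedFDeriv ℝ l H (c + x))
        (fderiv ℝ (iteratedFDeriv ℝ l H) (c + x)) x := by
      have := ((hd l (c + x)).hasFDerivAt).comp x ((hasFDerivAt_id x).const_add c)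
      simpa [Function.comp_def] using this
    rw [h2.fderiv]


private lemma taylor_hasSum {E M : Type*} [NormedAddCommGroup E] [NormedSpace ℝ E]
    [NormedAddCommGroup M] [NormedSpace ℝ M] [CompleteSpace M]
    (h : E → M) (hh : AnalyticOnNhd ℝ h Set.univ) (z y : E) (C : ℕ → ℝ)
    (hC : ∀ l, ‖iteratedFDeriv ℝ l h z‖ * ‖y‖ ^ l / l.factorial ≤ C l)
    (hCs : Summable fun l => C l * (4 / 3 : ℝ) ^ l) :
    HasSum (fun l => ((l.factorial : ℝ))⁻¹ • iteratedFDeriv ℝ l h z (fun _ => y))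
      (h (z + y)) := by
  classical
  set φ : ℝ → M := fun t => h (z + t • y) with hφdef
  set ℓ : ℝ →L[ℝ] E := (ContinuousLinearMap.id ℝ ℝ).smulRight y with hℓdef
  have hℓ_apply : ∀ t : ℝ, ℓ t = t • y := fun t => rfl
  -- differentiability of all iterated derivatives of h
  have hdm : ∀ m, Differentiable ℝ (iteratedFDeriv ℝ m h) := fun m x =>
    ((hh.iteratedFDeriv m) x (Set.mem_univ x)).differentiableAt
  -- h translated
  have hz_an : AnalyticOnNhd ℝ (fun w => h (z + w)) Set.univ := fun x _ =>
    (hh _ (Set.mem_univ _)).comp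
      ((analyticAt_const (v := z)).add ((ContinuousLinearMap.id ℝ E).analyticAt x))
  have hz_cd : ContDiff ℝ ⊤ (fun w => h (z + w)) := hz_an.contDiff
  -- analyticity of φ
  have hφan : ∀ t : ℝ, AnalyticAt ℝ φ t := fun t =>
    (hh _ (Set.mem_univ _)).comp ((analyticAt_const (v := z)).add (ℓ.analyticAt t))
  -- key: iterated derivatives of φ at 0
  have hkey : ∀ l : ℕ, iteratedFDeriv ℝ l φ 0 (fun _ => (1 : ℝ))
      = iteratedFDeriv ℝ l h z (fun _ => y) := by
    intro l
    have hcomp := ContinuousLinearMap.iteratedFDeriv_comp_right ℓ hz_cd (0 : ℝ)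
      (i := l) le_top
    have hφeq : φ = (fun w => h (z + w)) ∘ ℓ := rfl
    rw [hφeq, hcomp]
    have hl0 : ℓ (0 : ℝ) = 0 := by simp
    rw [hl0, itfd_translate h hdm z l 0]
    simp only [ContinuousMultilinearMap.compContinuousLinearMap_apply]
    rw [add_zero]
    congr 1
    funext i
    simp [hℓ_apply]
  set c : ℕ → M := fun l => ((l.factorial : ℝ))⁻¹ • iteratedFDeriv ℝ l φ 0 (fun _ => (1 : ℝ))
    with hcdef
  have hc : ∀ l, c l = ((l.factorial : ℝ))⁻¹ • iteratedFDeriv ℝ l h z (fun _ => y) := by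
    intro l; rw [hcdef]; simp only [hkey]
  set σ : FormalMultilinearSeries ℝ ℝ M :=
    fun l => ContinuousMultilinearMap.mkPiRing ℝ (Fin l) (c l) with hσdef
  obtain ⟨τ, hτ⟩ := hφan 0
  obtain ⟨r, hrτ⟩ := hτ
  -- σ = τ
  have hστ : σ = τ := by
    funext l
    show ContinuousMultilinearMap.mkPiRing ℝ (Fin l) (c l) = τ l
    rw [← τ.mkPiRing_coeff_eq l]
    congr 1
    have hfs := hrτ.factorial_smul (1 : ℝ) l
    have h1 : (fun _ : Fin l => (1 : ℝ)) = (1 : Fin l → ℝ) := rfl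
    have : c l = ((l.factorial : ℝ))⁻¹ • (l.factorial • τ l (fun _ => (1 : ℝ))) := by
      rw [hcdef]; simp only [hfs]
    rw [this, ← Nat.cast_smul_eq_nsmul ℝ, smul_smul,
      inv_mul_cancel₀ (Nat.cast_ne_zero.2 l.factorial_ne_zero), one_smul,
      FormalMultilinearSeries.coeff, h1]
  have hσat : HasFPowerSeriesAt φ σ 0 := by rw [hστ]; exact ⟨r, hrτ⟩
  -- norm bounds on σ
  have hCnn : ∀ l, 0 ≤ C l := fun l => le_trans (by positivity) (hC l)
  have hnormσ : ∀ l, ‖σ l‖ ≤ C l := by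
    intro l
    rw [hσdef]
    rw [ContinuousMultilinearMap.norm_mkPiRing, hc l, norm_smul]
    have h1 : ‖((l.factorial : ℝ))⁻¹‖ = ((l.factorial : ℝ))⁻¹ := by
      rw [Real.norm_eq_abs, abs_of_nonneg (by positivity)]
    rw [h1]
    refine le_trans ?_ (hC l)
    have h2 : ‖iteratedFDeriv ℝ l h z (fun _ => y)‖
        ≤ ‖iteratedFDeriv ℝ l h z‖ * ‖y‖ ^ l := by
      have := (iteratedFDeriv ℝ l h z).le_opNorm (fun _ => y)
      simpa using this
    rw [div_eq_mul_inv, mul_comm (‖iteratedFDeriv ℝ l h z‖ * ‖y‖ ^ l) _]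
    exact mul_le_mul_of_nonneg_left h2 (by positivity)
  -- radius
  have hcoe : (((4 / 3 : NNReal) : ℝ)) = (4 / 3 : ℝ) := by
    rw [NNReal.coe_div]; norm_num
  have hrad : ((4 / 3 : NNReal) : ENNReal) ≤ σ.radius := by
    apply σ.le_radius_of_summable_norm
    rw [hcoe]
    apply Summable.of_nonneg_of_le (fun l => mul_nonneg (norm_nonneg _) (by positivity))
      (fun l => mul_le_mul_of_nonneg_right (hnormσ l) (by positivity)) hCs
  have hpos : (0 : ENNReal) < σ.radius :=
    lt_of_lt_of_le (by exact_mod_cast ENNReal.coe_pos.mpr (by norm_num)) hrad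
  have hball : HasFPowerSeriesOnBall σ.sum σ 0 ((4 / 3 : NNReal) : ENNReal) :=
    (σ.hasFPowerSeriesOnBall hpos).mono (ENNReal.coe_pos.mpr (by norm_num)) hrad
  -- eventual equality
  obtain ⟨r', hr'⟩ := hσat
  have hev : φ =ᶠ[nhds (0 : ℝ)] σ.sum := by
    filter_upwards [EMetric.ball_mem_nhds (0 : ℝ) (lt_min hr'.r_pos hpos)] with w hw
    have hw1 : w ∈ EMetric.ball (0 : ℝ) r' :=
      EMetric.ball_subset_ball (min_le_left _ _) hw
    have hs := hr'.hasSum hw1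
    rw [zero_add] at hs
    exact hs.tsum_eq.symm
  -- identity theorem
  have hU : IsPreconnected (Metric.eball (0 : ℝ) ((4 / 3 : NNReal) : ENNReal)) := by
    rw [Metric.emetric_ball_nnreal]
    exact (convex_ball _ _).isPreconnected
  have hφU : AnalyticOnNhd ℝ φ (Metric.eball (0 : ℝ) ((4 / 3 : NNReal) : ENNReal)) :=
    fun t _ => hφan t
  have hσU := hball.analyticOnNhd
  have h0mem : (0 : ℝ) ∈ Metric.eball (0 : ℝ) ((4 / 3 : NNReal) : ENNReal) :=
    EMetric.mem_ball_self (ENNReal.coe_pos.mpr (by norm_num))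
  have h1mem : (1 : ℝ) ∈ Metric.eball (0 : ℝ) ((4 / 3 : NNReal) : ENNReal) := by
    rw [Metric.emetric_ball_nnreal, Metric.mem_ball, Real.dist_eq, hcoe]
    norm_num
  have heq := AnalyticOnNhd.eqOn_of_preconnected_of_eventuallyEq hφU hσU hU h0mem hev
  have hφ1 : φ 1 = σ.sum 1 := heq h1mem
  -- conclude
  have hs := hball.hasSum (y := (1 : ℝ)) h1mem
  rw [zero_add] at hs
  have hσ1 : ∀ n, σ n (fun _ => (1 : ℝ)) = c n := by
    intro n
    rw [hσdef]
    simp [ContinuousMultilinearMap.mkPiRing_apply]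
  simp only [hσ1] at hs
  rw [← hφ1] at hs
  have hφ1v : φ 1 = h (z + y) := by rw [hφdef]; simp
  rw [hφ1v] at hs
  have : (fun l => ((l.factorial : ℝ))⁻¹ • iteratedFDeriv ℝ l h z (fun _ => y)) = c :=
    funext fun l => (hc l).symm
  rw [this]
  exact hs

private lemma smul_apply_norm_le {E M : Type*} [NormedAddCommGroup E] [NormedSpace ℝ E]
    [NormedAddCommGroup M] [NormedSpace ℝ M] (l : ℕ)
    (T : ContinuousMultilinearMap ℝ (fun _ : Fin l => E) M) (y : E) :
    ‖((l.factorial : ℝ))⁻¹ • T (fun _ => y)‖ ≤ ‖T‖ * ‖y‖ ^ l / l.factorial := by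
  rw [norm_smul, Real.norm_eq_abs, abs_of_nonneg (by positivity), div_eq_mul_inv,
    mul_comm (‖T‖ * ‖y‖ ^ l) _]
  refine mul_le_mul_of_nonneg_left ?_ (by positivity)
  simpa using T.le_opNorm (fun _ => y)

set_option maxHeartbeats 1000000 in
set_option synthInstance.maxHeartbeats 200000 in
/-- Lemma 8 (flat case), second estimate: if `Df(z)` is invertible and
`ν = ‖z - z₁‖γ(f,z) < 1-√2/2`, then `γ(f,z₁) ≤ γ(f,z)/((1-ν)ψ(ν))`. -/
theorem gamma_variation_bound {n : ℕ}
    (f : EuclideanSpace ℝ (Fin n) → EuclideanSpace ℝ (Fin n))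
    (hf : ∀ w, AnalyticAt ℝ f w)
    (z z₁ : EuclideanSpace ℝ (Fin n))
    (hinv : IsUnit (fderiv ℝ f z))
    (hfin : BddAbove (Set.range fun k : ℕ => smaleTerm f z (k + 2)))
    (hν : ‖z - z₁‖ * smaleGamma f z < 1 - Real.sqrt 2 / 2) :
    smaleGamma f z₁ ≤
      smaleGamma f z /
        ((1 - ‖z - z₁‖ * smaleGamma f z) * psi (‖z - z₁‖ * smaleGamma f z)) := by
  classical
  set γ := smaleGamma f z with hγdef
  set u := ‖z - z₁‖ * γ with hudef
  -- nonnegativity of γ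
  have hterm_nonneg : ∀ k, 0 ≤ smaleTerm f z (k + 2) := fun k =>
    Real.rpow_nonneg (div_nonneg (norm_nonneg _) (Nat.cast_nonneg _)) _
  have hγ0 : 0 ≤ γ := le_trans (hterm_nonneg 0) (le_ciSup hfin 0)
  have hu0 : 0 ≤ u := mul_nonneg (norm_nonneg _) hγ0
  -- numeric facts
  have hsqrt2 : 1 < Real.sqrt 2 := by
    nlinarith [Real.sq_sqrt (show (0:ℝ) ≤ 2 by norm_num), Real.sqrt_nonneg 2]
  have hu_half : u < 1 / 2 := by nlinarith
  have h1u : 0 < 1 - u := by nlinarith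
  have hsq : 1 / 2 < (1 - u) ^ 2 := by
    have e1 : 0 < 1 - Real.sqrt 2 / 2 - u := by linarith
    have e2 : 0 < 1 - u + Real.sqrt 2 / 2 := by nlinarith
    nlinarith [mul_pos e1 e2, Real.sq_sqrt (show (0:ℝ) ≤ 2 by norm_num)]
  have hψpos : 0 < psi u := by simp only [psi]; nlinarith
  have hψ1 : psi u ≤ 1 := by simp only [psi]; nlinarith
  have hunorm : ‖u‖ < 1 := by rw [Real.norm_eq_abs, abs_of_nonneg hu0]; nlinarith
  have h43u : ‖u * (4 / 3)‖ < 1 := by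
    rw [Real.norm_eq_abs, abs_of_nonneg (by positivity)]; nlinarith
  -- the normalized function g
  have hf_an : AnalyticOnNhd ℝ f Set.univ := fun x _ => hf x
  have hcf : ContDiff ℝ (⊤ : WithTop ℕ∞) f := hf_an.contDiff
  set A : EuclideanSpace ℝ (Fin n) →L[ℝ] EuclideanSpace ℝ (Fin n) := dfInv f z with hAdef
  set g : EuclideanSpace ℝ (Fin n) → EuclideanSpace ℝ (Fin n) := fun w => A (f w) with hgdef
  have hg_an : AnalyticOnNhd ℝ g Set.univ := fun x _ => (A.analyticAt (f x)).comp (hf x)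
  have hgD : ∀ (m : ℕ) (x : EuclideanSpace ℝ (Fin n)),
      iteratedFDeriv ℝ m g x = A.compContinuousMultilinearMap (iteratedFDeriv ℝ m f x) :=
    fun m x => A.iteratedFDeriv_comp_left (x := x) hcf.contDiffAt le_top
  -- coefficient bounds at z
  have hA' : ∀ m : ℕ, ‖iteratedFDeriv ℝ (m + 2) g z‖
      ≤ ((m + 2).factorial : ℝ) * γ ^ (m + 1) := by
    intro m
    have hfac : (0 : ℝ) < ((m + 2).factorial : ℝ) := by
      exact_mod_cast (m + 2).factorial_pos
    set cst := ‖(dfInv f z).compContinuousMultilinearMap (iteratedFDeriv ℝ (m + 2) f z)‖ /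
      ((m + 2).factorial : ℝ) with hcst
    have hc0 : 0 ≤ cst := div_nonneg (norm_nonneg _) hfac.le
    have hst : smaleTerm f z (m + 2) = cst ^ ((1 : ℝ) / ((m + 1 : ℕ) : ℝ)) := by
      simp only [smaleTerm, hcst]
      congr 2
      push_cast; ring
    have hne : ((m + 1 : ℕ) : ℝ) ≠ 0 := by positivity
    have hcst_eq : cst = (smaleTerm f z (m + 2)) ^ ((m + 1 : ℕ) : ℝ) := by
      rw [hst, ← Real.rpow_mul hc0, one_div, inv_mul_cancel₀ hne, Real.rpow_one]
    have hterm := le_ciSup hfin m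
    have hcstle : cst ≤ γ ^ (m + 1) := by
      rw [hcst_eq, Real.rpow_natCast]
      exact pow_le_pow_left₀ (hterm_nonneg m) hterm (m + 1)
    have : ‖(dfInv f z).compContinuousMultilinearMap (iteratedFDeriv ℝ (m + 2) f z)‖
        = cst * ((m + 2).factorial : ℝ) := by
      rw [hcst, div_mul_cancel₀]; exact hfac.ne'
    rw [hgD, this, mul_comm (((m + 2).factorial : ℝ)) (γ ^ (m + 1))]
    exact mul_le_mul_of_nonneg_right hcstle hfac.le
  set y := z₁ - z with hydef
  have hyn : ‖y‖ = ‖z - z₁‖ := norm_sub_rev _ _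
  have hyu : γ * ‖y‖ = u := by rw [hyn, hudef, mul_comm]
  have hzy : z + y = z₁ := by rw [hydef]; abel
  -- KEY B : bound on higher derivatives of g at z₁
  have hB : ∀ j : ℕ, ‖iteratedFDeriv ℝ (j + 2) g z₁‖
      ≤ ((j + 2).factorial : ℝ) * γ ^ (j + 1) / (1 - u) ^ (j + 3) := by
    intro j
    set C : ℕ → ℝ := fun l =>
      ((j + 2).factorial : ℝ) * γ ^ (j + 1) * (((l + (j + 2)).choose (j + 2) : ℕ) : ℝ) * u ^ l
      with hCdef
    have hCnn : ∀ l, 0 ≤ C l := fun l => by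
      rw [hCdef]
      have := pow_nonneg hγ0 (j + 1)
      have := pow_nonneg hu0 l
      positivity
    have hfactR : ∀ l : ℕ, (((l + (j + 2)).choose (j + 2) : ℕ) : ℝ) *
        ((j + 2).factorial : ℝ) * (l.factorial : ℝ) = (((l + (j + 2)).factorial : ℕ) : ℝ) := by
      intro l
      have h1 := Nat.choose_mul_factorial_mul_factorial (Nat.le_add_left (j + 2) l)
      have h2 : l + (j + 2) - (j + 2) = l := by omega
      rw [h2] at h1
      exact_mod_cast h1
    have hC : ∀ l, ‖iteratedFDeriv ℝ l (iteratedFDeriv ℝ (j + 2) g) z‖ * ‖y‖ ^ l /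
        (l.factorial : ℝ) ≤ C l := by
      intro l
      rw [norm_itfd_itfd g l (j + 2) z]
      have hidx : j + 2 + l = (j + l) + 2 := by omega
      have hbound : ‖iteratedFDeriv ℝ (j + 2 + l) g z‖
          ≤ ((j + 2 + l).factorial : ℝ) * γ ^ (j + l + 1) := by
        rw [hidx]
        have := hA' (j + l)
        convert this using 3 <;> omega
      have hlfac : (0 : ℝ) < (l.factorial : ℝ) := by exact_mod_cast l.factorial_pos
      have hidx2 : j + 2 + l = l + (j + 2) := by omega
      have hCeq : ((j + 2 + l).factorial : ℝ) * γ ^ (j + l + 1) * ‖y‖ ^ l /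
          (l.factorial : ℝ) = C l := by
        rw [hidx2, ← hfactR l]
        simp only [hCdef]
        have hpow : γ ^ (j + l + 1) = γ ^ (j + 1) * γ ^ l := by
          rw [← pow_add]; congr 1; omega
        rw [hpow, ← hyu, mul_pow]
        field_simp
      rw [← hCeq]
      gcongr
    have hCs : Summable fun l => C l * (4 / 3 : ℝ) ^ l := by
      have hs := (summable_choose_mul_geometric_of_norm_lt_one (j + 2) h43u).mul_left
        (((j + 2).factorial : ℝ) * γ ^ (j + 1))
      apply hs.congr
      intro l
      simp only [hCdef, mul_pow]
      ring
    have hsum := taylor_hasSum (iteratedFDeriv ℝ (j + 2) g) (hg_an.iteratedFDeriv (j + 2))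
      z y C hC hCs
    rw [hzy] at hsum
    have hbnd : ∀ l, ‖((l.factorial : ℝ))⁻¹ •
        iteratedFDeriv ℝ l (iteratedFDeriv ℝ (j + 2) g) z (fun _ => y)‖ ≤ C l := fun l =>
      (smul_apply_norm_le l _ y).trans (hC l)
    have hCsum : Summable C := by
      refine Summable.of_nonneg_of_le hCnn (fun l => ?_) hCs
      exact le_mul_of_one_le_right (hCnn l) (one_le_pow₀ (by norm_num))
    have hnsum : Summable (fun l => ‖((l.factorial : ℝ))⁻¹ •
        iteratedFDeriv ℝ l (iteratedFDeriv ℝ (j + 2) g) z (fun _ => y)‖) :=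
      Summable.of_nonneg_of_le (fun _ => norm_nonneg _) hbnd hCsum
    calc ‖iteratedFDeriv ℝ (j + 2) g z₁‖ = ‖∑' l, ((l.factorial : ℝ))⁻¹ •
          iteratedFDeriv ℝ l (iteratedFDeriv ℝ (j + 2) g) z (fun _ => y)‖ := by
          rw [hsum.tsum_eq]
      _ ≤ ∑' l, ‖((l.factorial : ℝ))⁻¹ •
          iteratedFDeriv ℝ l (iteratedFDeriv ℝ (j + 2) g) z (fun _ => y)‖ :=
          norm_tsum_le_tsum_norm hnsum
      _ ≤ ∑' l, C l := Summable.tsum_le_tsum hbnd hnsum hCsum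
      _ = (((j + 2).factorial : ℝ) * γ ^ (j + 1)) *
          ∑' l, ((((l + (j + 2)).choose (j + 2) : ℕ) : ℝ) * u ^ l) := by
          rw [← tsum_mul_left]; congr 1; funext l; simp only [hCdef]; ring
      _ = ((j + 2).factorial : ℝ) * γ ^ (j + 1) / (1 - u) ^ (j + 3) := by
          rw [tsum_choose_mul_geometric_of_norm_lt_one (j + 2) hunorm]
          have : (j + 2) + 1 = j + 3 := by omega
          rw [this]; ring
    -- fderiv of g
  have hfg : ∀ x, fderiv ℝ g x = A.comp (fderiv ℝ f x) := by
    intro x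
    have hd : HasFDerivAt f (fderiv ℝ f x) x := (hf x).differentiableAt.hasFDerivAt
    exact ((A.hasFDerivAt).comp x hd).fderiv
  have hgz : fderiv ℝ g z = 1 := by
    rw [hfg z, ← ContinuousLinearMap.mul_def]
    show Ring.inverse (fderiv ℝ f z) * fderiv ℝ f z = 1
    exact Ring.inverse_mul_cancel _ hinv
  -- KEY C : the derivative of g at z₁ is close to the identity
  have hC1 : ‖fderiv ℝ g z₁ - 1‖ ≤ 1 / (1 - u) ^ 2 - 1 := by
    set C : ℕ → ℝ := fun l => ((l + 1 : ℕ) : ℝ) * u ^ l with hCdef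
    have hfd_an : AnalyticOnNhd ℝ (fderiv ℝ g) Set.univ := hg_an.fderiv
    have hC : ∀ l, ‖iteratedFDeriv ℝ l (fderiv ℝ g) z‖ * ‖y‖ ^ l /
        (l.factorial : ℝ) ≤ C l := by
      intro l
      rcases l with _ | l
      · have h1 : ‖(1 : EuclideanSpace ℝ (Fin n) →L[ℝ] EuclideanSpace ℝ (Fin n))‖ ≤ 1 := by
          rw [ContinuousLinearMap.one_def]
          exact ContinuousLinearMap.norm_id_le
        have h2 : C 0 = 1 := by simp [hCdef]
        rw [norm_iteratedFDeriv_zero, hgz, h2]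
        simp only [pow_zero, mul_one, Nat.factorial_zero, Nat.cast_one, div_one]
        exact h1
      · rw [norm_iteratedFDeriv_fderiv]
        have hbound := hA' l
        have hlfac : (0 : ℝ) < ((l + 1).factorial : ℝ) := by
          exact_mod_cast (l + 1).factorial_pos
        have hCeq : ((l + 2).factorial : ℝ) * γ ^ (l + 1) * ‖y‖ ^ (l + 1) /
            ((l + 1).factorial : ℝ) = C (l + 1) := by
          simp only [hCdef]
          have hfs : ((l + 2).factorial : ℝ) = ((l + 2 : ℕ) : ℝ) * ((l + 1).factorial : ℝ) := by
            exact_mod_cast congrArg (Nat.cast (R := ℝ)) (Nat.factorial_succ (l + 1))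
          rw [hfs, ← hyu, mul_pow]
          field_simp
        rw [← hCeq]
        gcongr
    have hCs : Summable fun l => C l * (4 / 3 : ℝ) ^ l := by
      have hs := summable_choose_mul_geometric_of_norm_lt_one 1 h43u
      apply hs.congr
      intro l
      simp only [hCdef, Nat.choose_one_right, mul_pow]
      push_cast
      ring
    have hCsum : Summable C := by
      refine Summable.of_nonneg_of_le (fun l => ?_) (fun l => ?_) hCs
      · have := pow_nonneg hu0 l
        simp only [hCdef]; positivity
      · refine le_mul_of_one_le_right ?_ (one_le_pow₀ (by norm_num))
        have := pow_nonneg hu0 l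
        simp only [hCdef]; positivity
    have hsum := taylor_hasSum (fderiv ℝ g) hfd_an z y C hC hCs
    rw [hzy] at hsum
    have hc0 : ((Nat.factorial 0 : ℝ))⁻¹ •
        iteratedFDeriv ℝ 0 (fderiv ℝ g) z (fun _ => y) = 1 := by
      simp [hgz]
    have hbnd : ∀ l, ‖((l.factorial : ℝ))⁻¹ •
        iteratedFDeriv ℝ l (fderiv ℝ g) z (fun _ => y)‖ ≤ C l := fun l =>
      (smul_apply_norm_le l _ y).trans (hC l)
    have hSsum := hsum.summable
    have htail : fderiv ℝ g z₁ - 1 = ∑' l, (((l + 1).factorial : ℝ))⁻¹ •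
        iteratedFDeriv ℝ (l + 1) (fderiv ℝ g) z (fun _ => y) := by
      rw [← hsum.tsum_eq, Summable.tsum_eq_zero_add hSsum, hc0, add_sub_cancel_left]
    rw [htail]
    have htails : Summable (fun l => (((l + 1).factorial : ℝ))⁻¹ •
        iteratedFDeriv ℝ (l + 1) (fderiv ℝ g) z (fun _ => y)) :=
      (summable_nat_add_iff 1).2 hSsum
    have hntail : Summable (fun l => ‖(((l + 1).factorial : ℝ))⁻¹ •
        iteratedFDeriv ℝ (l + 1) (fderiv ℝ g) z (fun _ => y)‖) :=
      ((summable_nat_add_iff 1).2 (Summable.of_nonneg_of_le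
        (fun _ => norm_nonneg _) hbnd hCsum) : _)
    have hCtail : Summable (fun l => C (l + 1)) := (summable_nat_add_iff 1).2 hCsum
    have htsumC : ∑' l, C l = 1 / (1 - u) ^ 2 := by
      have h1 := tsum_choose_mul_geometric_of_norm_lt_one 1 hunorm (𝕜 := ℝ) (r := u)
      rw [← h1]
      congr 1
      funext l
      simp only [hCdef, Nat.choose_one_right]
      try push_cast
      try ring
    have hC0 : C 0 = 1 := by simp [hCdef]
    have htailC : ∑' l, C (l + 1) = 1 / (1 - u) ^ 2 - 1 := by
      have := Summable.tsum_eq_zero_add hCsum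
      rw [htsumC, hC0] at this
      linarith
    calc ‖∑' l, (((l + 1).factorial : ℝ))⁻¹ •
          iteratedFDeriv ℝ (l + 1) (fderiv ℝ g) z (fun _ => y)‖
        ≤ ∑' l, ‖(((l + 1).factorial : ℝ))⁻¹ •
          iteratedFDeriv ℝ (l + 1) (fderiv ℝ g) z (fun _ => y)‖ :=
          norm_tsum_le_tsum_norm hntail
      _ ≤ ∑' l, C (l + 1) := Summable.tsum_le_tsum (fun l => hbnd (l + 1)) hntail hCtail
      _ = 1 / (1 - u) ^ 2 - 1 := htailC
  -- Neumann series for the inverse of the derivative of g at z₁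
  set L := fderiv ℝ g z₁ with hLdef
  set ε : ℝ := 1 / (1 - u) ^ 2 - 1 with hεdef
  have h2pos : (0 : ℝ) < (1 - u) ^ 2 := by positivity
  have hε0 : 0 ≤ ε := by
    have h1 : (1 - u) ^ 2 ≤ 1 := by nlinarith
    have h2 : 1 ≤ 1 / (1 - u) ^ 2 := by rw [le_div_iff₀ h2pos, one_mul]; exact h1
    simp only [hεdef]; linarith
  have hε1 : ε < 1 := by
    have h2 : 1 / (1 - u) ^ 2 < 2 := by
      rw [div_lt_iff₀ h2pos]; nlinarith
    simp only [hεdef]; linarith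
  set t : EuclideanSpace ℝ (Fin n) →L[ℝ] EuclideanSpace ℝ (Fin n) := 1 - L with htdef
  have ht_norm : ‖t‖ ≤ ε := by
    rw [htdef, norm_sub_rev]
    exact hC1
  have ht1 : ‖t‖ < 1 := lt_of_le_of_lt ht_norm hε1
  have hLt : L = 1 - t := by rw [htdef, sub_sub_cancel]
  have hLunit : IsUnit L := by rw [hLt]; exact isUnit_one_sub_of_norm_lt_one ht1
  have hψeq : psi u = 2 * (1 - u) ^ 2 - 1 := by simp only [psi]; ring
  have hinvL_norm : ‖Ring.inverse L‖ ≤ (1 - u) ^ 2 / psi u := by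
    rw [hLt, ← geom_series_eq_inverse t ht1]
    have hpow : ∀ i : ℕ, ‖t ^ i‖ ≤ ε ^ i := by
      intro i
      rcases i with _ | i
      · simp only [pow_zero]
        rw [ContinuousLinearMap.one_def]
        exact ContinuousLinearMap.norm_id_le
      · calc ‖t ^ (i + 1)‖ ≤ ‖t‖ ^ (i + 1) := norm_pow_le' t (Nat.succ_pos i)
          _ ≤ ε ^ (i + 1) := pow_le_pow_left₀ (norm_nonneg t) ht_norm (i + 1)
    have hgeo : Summable (fun i => ε ^ i) := summable_geometric_of_lt_one hε0 hε1
    have hsumt : Summable (fun i => ‖t ^ i‖) :=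
      Summable.of_nonneg_of_le (fun _ => norm_nonneg _) hpow hgeo
    have h1ε : 1 - ε = psi u / (1 - u) ^ 2 := by
      rw [hψeq, hεdef]
      field_simp
      ring
    calc ‖∑' i, t ^ i‖ ≤ ∑' i, ‖t ^ i‖ := norm_tsum_le_tsum_norm hsumt
      _ ≤ ∑' i, ε ^ i := Summable.tsum_le_tsum hpow hsumt hgeo
      _ = (1 - ε)⁻¹ := tsum_geometric_of_lt_one hε0 hε1
      _ = (1 - u) ^ 2 / psi u := by rw [h1ε, inv_div]
  -- the inverse of the derivative of f at z₁
  set B := fderiv ℝ f z with hBdef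
  have hBA : B * A = 1 := Ring.mul_inverse_cancel _ hinv
  have hfz₁ : fderiv ℝ f z₁ = B * L := by
    rw [hLdef, hfg z₁, ← ContinuousLinearMap.mul_def, ← mul_assoc, hBA, one_mul]
  have hdfInv₁ : dfInv f z₁ = Ring.inverse L * A := by
    obtain ⟨Bu, hBu⟩ := hinv
    obtain ⟨Lu, hLu⟩ := hLunit
    show Ring.inverse (fderiv ℝ f z₁) = Ring.inverse L * A
    rw [hfz₁, ← hBu, ← hLu, ← Units.val_mul, Ring.inverse_unit, mul_inv_rev, Units.val_mul]
    have e1 : ((Lu⁻¹ : _ˣ) : EuclideanSpace ℝ (Fin n) →L[ℝ] EuclideanSpace ℝ (Fin n))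
        = Ring.inverse L := by rw [← Ring.inverse_unit, hLu]
    have e2 : ((Bu⁻¹ : _ˣ) : EuclideanSpace ℝ (Fin n) →L[ℝ] EuclideanSpace ℝ (Fin n))
        = A := by rw [← Ring.inverse_unit, hBu, hBdef, hAdef]; rfl
    rw [e1, e2, hLu]
  -- final per-term bound
  have hQ : ∀ j : ℕ, ‖(dfInv f z₁).compContinuousMultilinearMap (iteratedFDeriv ℝ (j + 2) f z₁)‖
      ≤ ((1 - u) ^ 2 / psi u) * (((j + 2).factorial : ℝ) * γ ^ (j + 1) / (1 - u) ^ (j + 3)) := by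
    intro j
    have hcomp : (dfInv f z₁).compContinuousMultilinearMap (iteratedFDeriv ℝ (j + 2) f z₁)
        = (Ring.inverse L).compContinuousMultilinearMap (iteratedFDeriv ℝ (j + 2) g z₁) := by
      rw [hgD (j + 2) z₁, hdfInv₁]
      exact ContinuousMultilinearMap.ext fun v => rfl
    rw [hcomp]
    refine le_trans (ContinuousLinearMap.norm_compContinuousMultilinearMap_le _ _) ?_
    exact mul_le_mul hinvL_norm (hB j) (norm_nonneg _)
      (div_nonneg (by positivity) hψpos.le)
  -- conclusion
  show (⨆ k : ℕ, smaleTerm f z₁ (k + 2)) ≤ γ / ((1 - u) * psi u)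
  refine ciSup_le fun j => ?_
  have hfacpos : (0 : ℝ) < ((j + 2).factorial : ℝ) := by exact_mod_cast (j + 2).factorial_pos
  have hne' : ((j + 1 : ℕ) : ℝ) ≠ 0 := by positivity
  set a := γ / (1 - u) with hadef
  have ha0 : 0 ≤ a := div_nonneg hγ0 h1u.le
  have hb1 : 1 ≤ 1 / psi u := by rw [le_div_iff₀ hψpos, one_mul]; exact hψ1
  have hexp : smaleTerm f z₁ (j + 2) =
      (‖(dfInv f z₁).compContinuousMultilinearMap (iteratedFDeriv ℝ (j + 2) f z₁)‖ /
        ((j + 2).factorial : ℝ)) ^ ((1 : ℝ) / ((j + 1 : ℕ) : ℝ)) := by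
    simp only [smaleTerm]
    congr 2
    push_cast
    ring
  have heq : ((1 - u) ^ 2 / psi u) * (((j + 2).factorial : ℝ) * γ ^ (j + 1) / (1 - u) ^ (j + 3)) /
      ((j + 2).factorial : ℝ) = a ^ (j + 1) * (1 / psi u) := by
    rw [hadef, div_pow]
    have h3 : (1 - u) ^ (j + 3) = (1 - u) ^ (j + 1) * (1 - u) ^ 2 := by
      rw [← pow_add]
    have h1une : (1 - u) ^ (j + 1) ≠ 0 := by positivity
    rw [h3]
    field_simp
  have hQle : ‖(dfInv f z₁).compContinuousMultilinearMap (iteratedFDeriv ℝ (j + 2) f z₁)‖ /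
      ((j + 2).factorial : ℝ) ≤ a ^ (j + 1) * (1 / psi u) := by
    rw [← heq]
    gcongr
    exact hQ j
  calc smaleTerm f z₁ (j + 2)
      = (‖(dfInv f z₁).compContinuousMultilinearMap (iteratedFDeriv ℝ (j + 2) f z₁)‖ /
        ((j + 2).factorial : ℝ)) ^ ((1 : ℝ) / ((j + 1 : ℕ) : ℝ)) := hexp
    _ ≤ (a ^ (j + 1) * (1 / psi u)) ^ ((1 : ℝ) / ((j + 1 : ℕ) : ℝ)) :=
        Real.rpow_le_rpow (by positivity) hQle (by positivity)
    _ = a * (1 / psi u) ^ ((1 : ℝ) / ((j + 1 : ℕ) : ℝ)) := by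
        rw [Real.mul_rpow (by positivity) (by positivity)]
        congr 1
        rw [← Real.rpow_natCast a (j + 1), ← Real.rpow_mul ha0, mul_one_div,
          div_self hne', Real.rpow_one]
    _ ≤ a * (1 / psi u) := by
        refine mul_le_mul_of_nonneg_left ?_ ha0
        have hle1 : (1 : ℝ) / ((j + 1 : ℕ) : ℝ) ≤ 1 := by
          rw [div_le_one (by positivity)]
          exact_mod_cast Nat.one_le_iff_ne_zero.mpr (Nat.succ_ne_zero j)
        calc (1 / psi u) ^ ((1 : ℝ) / ((j + 1 : ℕ) : ℝ))
            ≤ (1 / psi u) ^ (1 : ℝ) := Real.rpow_le_rpow_of_exponent_le hb1 hle1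
          _ = 1 / psi u := Real.rpow_one _
    _ = γ / ((1 - u) * psi u) := by
        rw [hadef]
        field_simp

end
end

section
/- Suppose (α_k), (β_k) are sequences of nonnegative reals with α₀ < 0.130716944, α_{k+1} ≤ α_k²/ψ(α_k)² and β_{k+1} ≤ ((1-α_k)/ψ(α_k))·α_k·β_k for all k, where ψ(u) = 1 - 4u + 2u². Then for all k: α_k ≤ (1/2)^(2^k - 1)·α₀ and β_k ≤ (1/2)^(2^k - 1)·β₀. -/
set_option maxHeartbeats 1000000 in
/-- Inductive core of the R-α theorem: if `(α_k)`, `(β_k)` are nonnegative with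
`α₀ < 0.130716944`, `α_{k+1} ≤ α_k²/ψ(α_k)²` and
`β_{k+1} ≤ ((1-α_k)/ψ(α_k))·α_k·β_k` where `ψ(u) = 1-4u+2u²`, then
`α_k ≤ (1/2)^(2^k-1) α₀` and `β_k ≤ (1/2)^(2^k-1) β₀`. -/
theorem alpha_beta_quadratic_decay (α β : ℕ → ℝ)
    (hα0 : ∀ k, 0 ≤ α k) (hβ0 : ∀ k, 0 ≤ β k)
    (ha : α 0 < 0.130716944)
    (hαrec : ∀ k, α (k + 1) ≤ (α k) ^ 2 / (1 - 4 * α k + 2 * (α k) ^ 2) ^ 2)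
    (hβrec : ∀ k, β (k + 1) ≤
      ((1 - α k) / (1 - 4 * α k + 2 * (α k) ^ 2)) * α k * β k) :
    ∀ k, α k ≤ ((1 : ℝ) / 2) ^ (2 ^ k - 1) * α 0 ∧
      β k ≤ ((1 : ℝ) / 2) ^ (2 ^ k - 1) * β 0 := by
  set a0 := α 0 with ha0
  have ha0nn : 0 ≤ a0 := hα0 0
  -- key numeric fact: 2 α₀ ≤ ψ(α₀)²
  have hkey : 2 * a0 ≤ (1 - 4 * a0 + 2 * a0 ^ 2) ^ 2 := by
    nlinarith [sq_nonneg a0, sq_nonneg (a0 - 0.130716944), mul_nonneg ha0nn ha0nn,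
      mul_nonneg (mul_nonneg ha0nn ha0nn) ha0nn, sq_nonneg (a0 * a0),
      sq_nonneg (1 - 4 * a0)]
  set p0 : ℝ := 1 - 4 * a0 + 2 * a0 ^ 2 with hp0def
  have hp0pos : 0 < p0 := by nlinarith [sq_nonneg a0]
  have hp0le1 : p0 ≤ 1 := by nlinarith
  have ha0lt1 : a0 < 1 := by nlinarith
  intro k
  induction k with
  | zero => simp [ha0]
  | succ k ih =>
    obtain ⟨ihα, ihβ⟩ := ih
    set t : ℝ := ((1 : ℝ) / 2) ^ (2 ^ k - 1) with htdef
    have htpos : 0 < t := by positivity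
    have htle1 : t ≤ 1 := pow_le_one₀ (by norm_num) (by norm_num)
    -- exponent arithmetic
    have hexp : ((1 : ℝ) / 2) ^ (2 ^ (k + 1) - 1) = (1 / 2) * t * t := by
      have h1 : (1 : ℕ) ≤ 2 ^ k := Nat.one_le_two_pow
      have h2 : 2 ^ (k + 1) - 1 = (2 ^ k - 1) + 1 + (2 ^ k - 1) := by
        rw [pow_succ]; omega
      rw [h2, pow_add, pow_succ, htdef]; ring
    set a := α k with hadef
    have hann : 0 ≤ a := hα0 k
    have haa0 : a ≤ a0 := ihα.trans (by nlinarith)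
    set p : ℝ := 1 - 4 * a + 2 * a ^ 2 with hpdef
    have hp0p : p0 ≤ p := by nlinarith
    have hppos : 0 < p := lt_of_lt_of_le hp0pos hp0p
    have hpsq : p0 ^ 2 ≤ p ^ 2 := by nlinarith
    have h2a0p : 2 * a0 ≤ p ^ 2 := hkey.trans hpsq
    clear_value a0 p0 t a p
    constructor
    · -- α step
      have hm : α (k + 1) * p ^ 2 ≤ a ^ 2 := by
        have := hαrec k
        rwa [← hadef, ← hpdef, le_div_iff₀ (by positivity)] at this
      have h1 : a ^ 2 ≤ (t * a0) ^ 2 := by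
        nlinarith [mul_self_le_mul_self hann ihα]
      have h4 : 0 ≤ t ^ 2 * a0 * (p ^ 2 - 2 * a0) :=
        mul_nonneg (by positivity) (by linarith)
      have hfinal : α (k + 1) * p ^ 2 ≤ (1 / 2 * t * t * a0) * p ^ 2 := by
        nlinarith [hm, h1, h4]
      rw [hexp]
      exact le_of_mul_le_mul_right hfinal (by positivity)
    · -- β step
      have hF : (1 - a) / p * a ≤ t / 2 := by
        rw [div_mul_eq_mul_div, div_le_iff₀ hppos]
        have h2a0p0 : 2 * a0 ≤ p0 := le_trans hkey (by nlinarith)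
        nlinarith [mul_nonneg hann hann, mul_nonneg htpos.le (sub_nonneg.2 hp0p)]
      have hFnn : 0 ≤ (1 - a) / p * a :=
        mul_nonneg (div_nonneg (by linarith) hppos.le) hann
      have hb : β (k + 1) ≤ (1 - a) / p * a * β k := by
        have := hβrec k
        rwa [← hadef, ← hpdef] at this
      have hb2 : (1 - a) / p * a * β k ≤ (t / 2) * β k :=
        mul_le_mul_of_nonneg_right hF (hβ0 k)
      have hb3 : (t / 2) * β k ≤ (t / 2) * (t * β 0) :=
        mul_le_mul_of_nonneg_left ihβ (by positivity)
      rw [hexp]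
      calc β (k + 1) ≤ (t / 2) * (t * β 0) := by linarith
        _ = 1 / 2 * t * t * β 0 := by ring
end
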